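/- Let G be a connected graph such that M = B(G) is a connected matroid with ground set E, and let (A, E - A) be a 2-separation of M such that every series pair of M is contained entirely in A or entirely in E - A. Then either V(A) ∩ V(E - A) consists of a single vertex, or one of G[A] or G[E - A] is a path whose end-vertices are exactly the vertices of V(A) ∩ V(E - A). -/

import Mathlib

open Matroid Set

namespace Bicirc

variable {α : Type*}

/-- A circuit of a matroid: a minimal dependent set. -/
def Circ (M : Matroid α) (C : Set α) : Prop :=
  M.Dep C ∧ ∀ D, D ⊂ C → M.Indep D

/-- A cocircuit: a circuit of the dual matroid. -/
def Cocirc (M : Matroid α) (C : Set α) : Prop := Circ M✶ C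

/-- Deletion of a set from a matroid. -/
def Del (M : Matroid α) (X : Set α) : Matroid α := M ↾ (M.E \ X)

/-- `e` is a loop of the matroid `M`. -/
def IsLoopE (M : Matroid α) (e : α) : Prop := Circ M {e}

/-- `e` is a coloop of the matroid `M`. -/
def IsColoopE (M : Matroid α) (e : α) : Prop := Cocirc M {e}

/-- A single element is a separator iff it is a loop or a coloop. -/
def SepElem (M : Matroid α) (e : α) : Prop := IsLoopE M e ∨ IsColoopE M e

/-- The rank of a set in a matroid (as a natural number). -/
noncomputable def rk (M : Matroid α) (X : Set α) : ℕ :=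
  sSup {n | ∃ I, M.Indep I ∧ I ⊆ X ∧ n = I.ncard}

/-- The rank of a matroid. -/
noncomputable def rkM (M : Matroid α) : ℕ := rk M M.E

/-- A matroid is connected if it is nonempty and every two distinct elements
lie in a common circuit. -/
def MConn (M : Matroid α) : Prop :=
  M.E.Nonempty ∧ ∀ e ∈ M.E, ∀ f ∈ M.E, e ≠ f → ∃ C, Circ M C ∧ e ∈ C ∧ f ∈ C

/-- `A` gives a `k`-separation `(A, M.E \ A)` of `M`. -/
def KSep (M : Matroid α) (k : ℕ) (A : Set α) : Prop :=
  A ⊆ M.E ∧ k ≤ A.ncard ∧ k ≤ (M.E \ A).ncard ∧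
    rk M A + rk M (M.E \ A) < rkM M + k

/-- A matroid is 3-connected if it has no `k`-separation for `k < 3`. -/
def ThreeConn (M : Matroid α) : Prop := ∀ k, 0 < k → k < 3 → ∀ A, ¬ KSep M k A

/-- Every pair of distinct elements of `C` lies in a common circuit of `M | C`. -/
def PairConn (M : Matroid α) (C : Set α) : Prop :=
  C ⊆ M.E ∧ ∀ e ∈ C, ∀ f ∈ C, e ≠ f → ∃ K, Circ (M ↾ C) K ∧ e ∈ K ∧ f ∈ K

/-- `C` is a connected component of the matroid `M`. -/
def IsComp (M : Matroid α) (C : Set α) : Prop :=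
  C.Nonempty ∧ PairConn M C ∧ ∀ D, PairConn M D → C ⊆ D → D = C

/-- A non-separating cocircuit: deleting it leaves a connected matroid. -/
def NonSepCocirc (M : Matroid α) (K : Set α) : Prop :=
  Cocirc M K ∧ MConn (Del M K)

/-- A cyclic flat: a flat whose restriction has no coloops. -/
def CyclicFlat (M : Matroid α) (Z : Set α) : Prop :=
  M.IsFlat Z ∧ ∀ e ∈ Z, ¬ IsColoopE (M ↾ Z) e

/-- `e` and `f` are clones: every cyclic flat contains one iff it contains the other. -/
def Clones (M : Matroid α) (e f : α) : Prop :=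
  ∀ Z, CyclicFlat M Z → (e ∈ Z ↔ f ∈ Z)

/-- A clonal class: a maximal set of pairwise clone elements. -/
def ClonalClass (M : Matroid α) (F : Set α) : Prop :=
  F ⊆ M.E ∧ (∀ e ∈ F, ∀ f ∈ F, Clones M e f) ∧
    ∀ F', F' ⊆ M.E → (∀ e ∈ F', ∀ f ∈ F', Clones M e f) → F ⊆ F' → F' = F

/-- Disjoint sets `X`, `Y` are skew: no circuit of `M` inside `X ∪ Y` meets both. -/
def Skew (M : Matroid α) (X Y : Set α) : Prop :=
  ∀ C, Circ M C → C ⊆ X ∪ Y → (C ∩ X = ∅ ∨ C ∩ Y = ∅)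

/-- A good cocircuit. -/
def GoodCocirc (M : Matroid α) (K : Set α) : Prop :=
  Cocirc M K ∧ (∃! D, IsComp (Del M K) D ∧ 1 < D.ncard) ∧
    ∀ x, IsColoopE (Del M K) x → ∀ D, IsComp (Del M K) D → 1 < D.ncard →
      ∃ F C, ClonalClass M F ∧ rk M F = 2 ∧ F ⊆ K ∧ Circ M C ∧ x ∈ C ∧
        C ∩ K ⊆ F ∧ (C ∩ K).ncard = 2 ∧ (C ∩ D).Nonempty

/-! ### Multigraphs -/

/-- A multigraph on vertex type `V` with edge type `E`: each edge has a pair of ends. -/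
structure MGraph (V : Type*) (E : Type*) where
  ends : E → Sym2 V

variable {V E : Type*}

/-- The vertices incident with at least one edge of `X`. -/
def VX (G : MGraph V E) (X : Set E) : Set V := {v | ∃ e ∈ X, v ∈ G.ends e}

/-- The set of edges incident with the vertex `v`. -/
def star (G : MGraph V E) (v : V) : Set E := {e | v ∈ G.ends e}

/-- The degree of `v` in the edge set `X` (loops count twice). -/
noncomputable def deg (G : MGraph V E) (X : Set E) (v : V) : ℕ :=
  ({e ∈ X | v ∈ G.ends e}).ncard + ({e ∈ X | G.ends e = s(v, v)}).ncard

/-- Two edges of `X` sharing a vertex. -/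
def EAdj (G : MGraph V E) (X : Set E) (a b : E) : Prop :=
  a ∈ X ∧ b ∈ X ∧ ∃ v, v ∈ G.ends a ∧ v ∈ G.ends b

/-- The subgraph `G[X]` is connected. -/
def ConnOn (G : MGraph V E) (X : Set E) : Prop :=
  ∀ a ∈ X, ∀ b ∈ X, Relation.ReflTransGen (EAdj G X) a b

/-- `C` is the edge set of a cycle of `G`. -/
def IsCycle (G : MGraph V E) (C : Set E) : Prop :=
  C.Nonempty ∧ ConnOn G C ∧ ∀ v ∈ VX G C, deg G C v = 2

/-- `X` contains no cycle. -/
def Acyclic (G : MGraph V E) (X : Set E) : Prop := ∀ C, C ⊆ X → ¬ IsCycle G C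

/-- `X` contains two distinct cycles. -/
def TwoCycles (G : MGraph V E) (X : Set E) : Prop :=
  ∃ C₁ C₂, C₁ ⊆ X ∧ C₂ ⊆ X ∧ IsCycle G C₁ ∧ IsCycle G C₂ ∧ C₁ ≠ C₂

/-- A bicycle: a minimal edge set inducing a connected subgraph with more than one cycle. -/
def IsBicycle (G : MGraph V E) (X : Set E) : Prop :=
  (ConnOn G X ∧ TwoCycles G X) ∧ ∀ Y, Y ⊂ X → ¬ (ConnOn G Y ∧ TwoCycles G Y)

/-- `P` is the edge set of a path of `G` with end-vertices `u` and `v`. -/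
def IsPathBtw (G : MGraph V E) (P : Set E) (u v : V) : Prop :=
  P.Nonempty ∧ ConnOn G P ∧ Acyclic G P ∧ u ≠ v ∧
    deg G P u = 1 ∧ deg G P v = 1 ∧ ∀ w ∈ VX G P, deg G P w ≤ 2

/-- `X` induces a theta subgraph of `G`. -/
def IsTheta (G : MGraph V E) (X : Set E) : Prop :=
  ∃ u v P₁ P₂ P₃, u ≠ v ∧
    IsPathBtw G P₁ u v ∧ IsPathBtw G P₂ u v ∧ IsPathBtw G P₃ u v ∧
    P₁ ∩ P₂ = ∅ ∧ P₁ ∩ P₃ = ∅ ∧ P₂ ∩ P₃ = ∅ ∧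
    VX G P₁ ∩ VX G P₂ = {u, v} ∧ VX G P₁ ∩ VX G P₃ = {u, v} ∧
    VX G P₂ ∩ VX G P₃ = {u, v} ∧ X = P₁ ∪ P₂ ∪ P₃

/-- `X` induces a loose handcuff of `G`. -/
def IsLooseHandcuff (G : MGraph V E) (X : Set E) : Prop :=
  ∃ C₁ C₂ P u v, IsCycle G C₁ ∧ IsCycle G C₂ ∧ VX G C₁ ∩ VX G C₂ = ∅ ∧
    IsPathBtw G P u v ∧ VX G P ∩ VX G C₁ = {u} ∧ VX G P ∩ VX G C₂ = {v} ∧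
    P ∩ C₁ = ∅ ∧ P ∩ C₂ = ∅ ∧ X = C₁ ∪ C₂ ∪ P

/-- `X` induces a tight handcuff of `G`. -/
def IsTightHandcuff (G : MGraph V E) (X : Set E) : Prop :=
  ∃ C₁ C₂ v, IsCycle G C₁ ∧ IsCycle G C₂ ∧ C₁ ∩ C₂ = ∅ ∧
    VX G C₁ ∩ VX G C₂ = {v} ∧ X = C₁ ∪ C₂

/-- Vertex adjacency via an edge. -/
def VAdj (G : MGraph V E) (u w : V) : Prop := ∃ e, u ∈ G.ends e ∧ w ∈ G.ends e

/-- The graph `G` is connected. -/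
def GConn (G : MGraph V E) : Prop := ∀ u w : V, Relation.ReflTransGen (VAdj G) u w

/-- The graph `G - x` is connected. -/
def ConnAvoid (G : MGraph V E) (x : V) : Prop :=
  ∀ u w : V, u ≠ x → w ≠ x →
    Relation.ReflTransGen
      (fun a b => a ≠ x ∧ b ≠ x ∧ ∃ e, x ∉ G.ends e ∧ a ∈ G.ends e ∧ b ∈ G.ends e) u w

/-- `G` is 2-connected: connected and with no cutvertex. -/
def TwoConnGraph (G : MGraph V E) : Prop := GConn G ∧ ∀ x, ConnAvoid G x

/-- `C` is (the edge set of) a connected component of `G[X]`. -/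
def IsGComp (G : MGraph V E) (X C : Set E) : Prop :=
  C ⊆ X ∧ C.Nonempty ∧ ConnOn G C ∧
    ∀ D, D ⊆ X → D.Nonempty → ConnOn G D → C ⊆ D → D = C

/-- The number of acyclic components of `G[X]`. -/
noncomputable def numAcyclicComps (G : MGraph V E) (X : Set E) : ℕ :=
  {C | IsGComp G X C ∧ Acyclic G C}.ncard

/-- `M` is the bicircular matroid of `G`: its circuits are precisely the bicycles. -/
def IsBicircOf (G : MGraph V E) (M : Matroid E) : Prop :=
  M.E = Set.univ ∧ ∀ C, Circ M C ↔ IsBicycle G C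

/-- The edge set `X` contains a pendent edge. -/
def PendentEdge (G : MGraph V E) (X : Set E) : Prop :=
  ∃ e ∈ X, ∃ w ∈ G.ends e, deg G X w = 1

/-- The graph `G - v` is a cycle. -/
def DelVIsCycle (G : MGraph V E) (v : V) : Prop :=
  IsCycle G {e | v ∉ G.ends e} ∧ ∀ w, w ≠ v → w ∈ VX G {e | v ∉ G.ends e}

/-! ### Matroid-labelled trees -/

/-- A matroid-labelled tree. -/
structure MTree (α : Type*) where
  ι : Type
  fin : Fintype ι
  lab : ι → Matroid α
  adj : ι → ι → Prop
  symm : ∀ i j, adj i j → adj j i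
  loopless : ∀ i, ¬ adj i i
  conn : ∀ i j, Relation.ReflTransGen adj i j
  acyc : ∀ i j, adj i j →
    ¬ Relation.ReflTransGen
        (fun a b => adj a b ∧ ¬(a = i ∧ b = j) ∧ ¬(a = j ∧ b = i)) i j
  card3 : (∃ i j : ι, i ≠ j) → ∀ i, 3 ≤ (lab i).E.ncard
  disj : ∀ i j, i ≠ j → ¬ adj i j → (lab i).E ∩ (lab j).E = ∅
  meet : ∀ i j, adj i j →
    ∃ e, (lab i).E ∩ (lab j).E = {e} ∧ ¬ SepElem (lab i) e ∧ ¬ SepElem (lab j) e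

/-- The basepoint elements of a matroid-labelled tree. -/
def MTree.bpts (T : MTree α) : Set α :=
  {e | ∃ i j, T.adj i j ∧ e ∈ (T.lab i).E ∧ e ∈ (T.lab j).E}

/-- The ground set of the matroid `M(T)`. -/
def MTree.ground (T : MTree α) : Set α := (⋃ i, (T.lab i).E) \ T.bpts

/-- The ground-set elements appearing in nodes of `S`. -/
def MTree.elems (T : MTree α) (S : Set T.ι) : Set α :=
  (⋃ i ∈ S, (T.lab i).E) ∩ T.ground

/-- `S` induces a connected subgraph of the tree. -/
def MTree.SubConn (T : MTree α) (S : Set T.ι) : Prop :=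
  ∀ i ∈ S, ∀ j ∈ S,
    Relation.ReflTransGen (fun a b => a ∈ S ∧ b ∈ S ∧ T.adj a b) i j

/-- The circuits of the matroid `M(T)`: glued along a connected subtree. -/
def MTree.IsTreeCircuit (T : MTree α) (C : Set α) : Prop :=
  ∃ (S : Set T.ι) (f : T.ι → Set α), S.Nonempty ∧ T.SubConn S ∧
    (∀ i ∈ S, Circ (T.lab i) (f i)) ∧
    (∀ i ∈ S, ∀ j, T.adj i j → ∀ e, e ∈ (T.lab i).E → e ∈ (T.lab j).E →
      (e ∈ f i ↔ j ∈ S)) ∧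
    C = (⋃ i ∈ S, f i) \ T.bpts

/-- `M = M(T)`. -/
def MTree.IsDecompOf (T : MTree α) (M : Matroid α) : Prop :=
  M.E = T.ground ∧ ∀ C, Circ M C ↔ T.IsTreeCircuit C

/-- A node whose matroid is a circuit. -/
def MTree.CircNode (T : MTree α) (i : T.ι) : Prop := Circ (T.lab i) (T.lab i).E

/-- A node whose matroid is a cocircuit. -/
def MTree.CocircNode (T : MTree α) (i : T.ι) : Prop := Cocirc (T.lab i) (T.lab i).E

/-- `T` is the canonical (Cunningham–Edmonds) decomposition tree of `M`. -/
def MTree.IsCanonical (T : MTree α) (M : Matroid α) : Prop :=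
  T.IsDecompOf M ∧
    (∀ i, ThreeConn (T.lab i) ∨ T.CircNode i ∨ T.CocircNode i) ∧
    ∀ i j, T.adj i j →
      ¬(T.CircNode i ∧ T.CircNode j) ∧ ¬(T.CocircNode i ∧ T.CocircNode j)

/-- The component of `T` minus the edge `{i, j}` containing `i`. -/
def MTree.side (T : MTree α) (i j : T.ι) : Set T.ι :=
  {k | Relation.ReflTransGen
        (fun a b => T.adj a b ∧ ¬(a = i ∧ b = j) ∧ ¬(a = j ∧ b = i)) i k}

/-- `(A, B)` is displayed by an edge of `T`. -/
def MTree.DispEdge (T : MTree α) (A B : Set α) : Prop :=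
  ∃ i j, T.adj i j ∧ A = T.elems (T.side i j) ∧ B = T.elems (T.side j i)

/-- The component of `T - n` containing `k`. -/
def MTree.compAvoid (T : MTree α) (n k : T.ι) : Set T.ι :=
  {k' | Relation.ReflTransGen (fun a b => T.adj a b ∧ a ≠ n ∧ b ≠ n) k k'}

/-- `(A, B)` is displayed by the node `n` of `T`. -/
def MTree.DispNode (T : MTree α) (n : T.ι) (A B : Set α) : Prop :=
  A ∪ B = T.ground ∧ A ∩ B = ∅ ∧
    ∀ k, k ≠ n →
      (T.elems (T.compAvoid n k) ⊆ A ∨ T.elems (T.compAvoid n k) ⊆ B)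

/-- `(A, B)` is a 2-separation of `M`. -/
def TwoSep (M : Matroid α) (A B : Set α) : Prop :=
  A ∪ B = M.E ∧ A ∩ B = ∅ ∧ 2 ≤ A.ncard ∧ 2 ≤ B.ncard ∧
    rk M A + rk M B ≤ rkM M + 1

/-- `X` is 2-separating in `M`. -/
def SepSet2 (M : Matroid α) (X : Set α) : Prop :=
  rk M X + rk M (M.E \ X) ≤ rkM M + 1

/-- A wedge relative to `A`: a maximal 2-separating nonempty proper subset of `M.E \ A`. -/
def Wedge (M : Matroid α) (A X : Set α) : Prop :=
  X ⊆ M.E \ A ∧ X.Nonempty ∧ X ≠ M.E \ A ∧ SepSet2 M X ∧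
    ∀ Y, Y ⊆ M.E \ A → Y.Nonempty → Y ≠ M.E \ A → SepSet2 M Y → X ⊆ Y → Y = X

/-- The rooted matroid `(N, L)` is bicircular: `N = B(H)` for some finite multigraph `H`
in which every element of `L` is a loop. -/
def RootedBicirc (N : Matroid α) (L : Set α) : Prop :=
  ∃ (V : Type) (_ : Fintype V) (_ : N.E.Finite) (G : MGraph V ↥N.E),
    (∀ D, Circ N D ↔ ∃ C : Set ↥N.E, IsBicycle G C ∧ D = Subtype.val '' C) ∧
    ∀ l : ↥N.E, l.1 ∈ L → (G.ends l).IsDiag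

/-! ### Development -/

section Dev
open Relation Set
set_option linter.unusedSectionVars false
set_option linter.unusedVariables false

variable {V E : Type*} [Fintype V] [Fintype E] {G : MGraph V E}
variable {X Y C Z K A B : Set E} {a b e f g : E} {p q u v w : V}

/-- The set of edges of `X` incident with `v`. -/
def inc (G : MGraph V E) (X : Set E) (v : V) : Set E := {e ∈ X | v ∈ G.ends e}

/-- The set of loops of `X` at `v`. -/
def lp (G : MGraph V E) (X : Set E) (v : V) : Set E := {e ∈ X | G.ends e = s(v, v)}

lemma deg_def (G : MGraph V E) (X : Set E) (v : V) :
    deg G X v = (inc G X v).ncard + (lp G X v).ncard := rfl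

lemma mem_VX_of (he : e ∈ X) (hv : v ∈ G.ends e) : v ∈ VX G X := ⟨e, he, hv⟩

lemma VX_mono (h : X ⊆ Y) : VX G X ⊆ VX G Y := fun v ⟨e, he, hv⟩ => ⟨e, h he, hv⟩

lemma VX_union : VX G (X ∪ Y) = VX G X ∪ VX G Y := by
  ext v
  constructor
  · rintro ⟨e, he | he, hv⟩
    exacts [Or.inl ⟨e, he, hv⟩, Or.inr ⟨e, he, hv⟩]
  · rintro (⟨e, he, hv⟩ | ⟨e, he, hv⟩)
    exacts [⟨e, Or.inl he, hv⟩, ⟨e, Or.inr he, hv⟩]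

lemma lp_subset_inc : lp G X v ⊆ inc G X v := by
  rintro e ⟨he, h⟩
  exact ⟨he, by rw [h]; exact Sym2.mem_mk_left v v⟩

lemma inc_mono (h : X ⊆ Y) : inc G X v ⊆ inc G Y v := fun e ⟨he, hv⟩ => ⟨h he, hv⟩

lemma lp_mono (h : X ⊆ Y) : lp G X v ⊆ lp G Y v := fun e ⟨he, hv⟩ => ⟨h he, hv⟩

lemma deg_mono (h : X ⊆ Y) : deg G X v ≤ deg G Y v := by
  rw [deg_def, deg_def]
  exact Nat.add_le_add (Set.ncard_le_ncard (inc_mono h) (Set.toFinite _))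
    (Set.ncard_le_ncard (lp_mono h) (Set.toFinite _))

lemma deg_union (h : X ∩ Y = ∅) : deg G (X ∪ Y) v = deg G X v + deg G Y v := by
  have h1 : inc G (X ∪ Y) v = inc G X v ∪ inc G Y v := by
    ext e; constructor
    · rintro ⟨he | he, hv⟩; exacts [Or.inl ⟨he, hv⟩, Or.inr ⟨he, hv⟩]
    · rintro (⟨he, hv⟩ | ⟨he, hv⟩); exacts [⟨Or.inl he, hv⟩, ⟨Or.inr he, hv⟩]
  have h2 : lp G (X ∪ Y) v = lp G X v ∪ lp G Y v := by
    ext e; constructor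
    · rintro ⟨he | he, hv⟩; exacts [Or.inl ⟨he, hv⟩, Or.inr ⟨he, hv⟩]
    · rintro (⟨he, hv⟩ | ⟨he, hv⟩); exacts [⟨Or.inl he, hv⟩, ⟨Or.inr he, hv⟩]
  have d1 : inc G X v ∩ inc G Y v = ∅ := by
    apply Set.eq_empty_iff_forall_notMem.2
    rintro e ⟨⟨he1, -⟩, ⟨he2, -⟩⟩
    exact (Set.eq_empty_iff_forall_notMem.1 h e) ⟨he1, he2⟩
  have d2 : lp G X v ∩ lp G Y v = ∅ := by
    apply Set.eq_empty_iff_forall_notMem.2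
    rintro e ⟨⟨he1, -⟩, ⟨he2, -⟩⟩
    exact (Set.eq_empty_iff_forall_notMem.1 h e) ⟨he1, he2⟩
  rw [deg_def, deg_def, deg_def, h1, h2,
    Set.ncard_union_eq (Set.disjoint_iff_inter_eq_empty.2 d1) (Set.toFinite _) (Set.toFinite _),
    Set.ncard_union_eq (Set.disjoint_iff_inter_eq_empty.2 d2) (Set.toFinite _) (Set.toFinite _)]
  ring

lemma mem_VX_iff_inc : v ∈ VX G X ↔ (inc G X v).Nonempty := by
  constructor
  · rintro ⟨e, he, hv⟩; exact ⟨e, he, hv⟩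
  · rintro ⟨e, he, hv⟩; exact ⟨e, he, hv⟩

lemma deg_eq_zero_of_not_mem (h : v ∉ VX G X) : deg G X v = 0 := by
  have h1 : inc G X v = ∅ := by
    rw [Set.eq_empty_iff_forall_notMem]
    rintro e ⟨he, hv⟩; exact h (mem_VX_iff_inc.2 ⟨e, he, hv⟩)
  have h2 : lp G X v = ∅ := by
    rw [Set.eq_empty_iff_forall_notMem]
    intro e he; exact absurd (h1 ▸ lp_subset_inc he) (Set.notMem_empty e)
  rw [deg_def, h1, h2]
  simp

lemma deg_pos_of_mem (h : v ∈ VX G X) : 1 ≤ deg G X v := by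
  rw [deg_def]
  have := (Set.ncard_pos (s := inc G X v) (Set.toFinite _)).2 (mem_VX_iff_inc.1 h)
  omega

lemma mem_VX_of_deg_pos (h : 1 ≤ deg G X v) : v ∈ VX G X := by
  by_contra hc
  rw [deg_eq_zero_of_not_mem hc] at h
  omega

lemma diag_eq_of_mem {s : Sym2 V} (hd : s.IsDiag) (hv : v ∈ s) : s = s(v, v) := by
  induction s using Sym2.ind with
  | _ a b =>
    rw [Sym2.mk_isDiag_iff] at hd
    subst hd
    rcases Sym2.mem_iff.1 hv with rfl | rfl <;> rfl

/-- If `deg X w = 1` then the unique edge at `w` is a non-loop. -/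
lemma deg_one_unique (h1 : deg G X w = 1) (he : e ∈ X) (hwe : w ∈ G.ends e) :
    (∀ f, f ∈ X → w ∈ G.ends f → f = e) ∧ ¬(G.ends e).IsDiag := by
  rw [deg_def] at h1
  have hle : (lp G X w).ncard ≤ (inc G X w).ncard :=
    Set.ncard_le_ncard lp_subset_inc (Set.toFinite _)
  have hpos : 1 ≤ (inc G X w).ncard :=
    (Set.ncard_pos (Set.toFinite _)).2 ⟨e, he, hwe⟩
  have hinc1 : (inc G X w).ncard = 1 := by omega
  have hlp0 : (lp G X w).ncard = 0 := by omega
  obtain ⟨a, ha⟩ := (Set.ncard_eq_one).1 hinc1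
  have hea : e = a := by
    have hmem : e ∈ inc G X w := ⟨he, hwe⟩
    rw [ha] at hmem; simpa using hmem
  constructor
  · intro f hf hwf
    have hmem : f ∈ inc G X w := ⟨hf, hwf⟩
    rw [ha] at hmem
    have : f = a := by simpa using hmem
    rw [this, ← hea]
  · intro hd
    have hmem : e ∈ lp G X w := ⟨he, diag_eq_of_mem hd hwe⟩
    have h0 := (Set.ncard_eq_zero (Set.toFinite (lp G X w))).1 hlp0
    rw [h0] at hmem
    exact hmem

open scoped Classical in
lemma sym2_count (s : Sym2 V) :
    ((∑ v : V, if v ∈ s then 1 else 0) + ∑ v : V, if s = s(v, v) then 1 else 0) = 2 := by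
  classical
  induction s using Sym2.ind with
  | _ a b =>
    by_cases hab : a = b
    · subst hab
      have e1 : (∑ v : V, if v ∈ s(a, a) then 1 else 0) = 1 := by
        rw [Finset.sum_congr rfl (g := fun v => if v = a then 1 else 0)
          (fun v _ => by simp [Sym2.mem_iff])]
        simp
      have e2 : (∑ v : V, if s(a, a) = s(v, v) then 1 else 0) = 1 := by
        rw [Finset.sum_congr rfl (g := fun v => if v = a then 1 else 0)
          (fun v _ => by
            by_cases hva : v = a
            · subst hva; simp
            · have h1 : ¬(s(a, a) = s(v, v)) := by
                intro h
                rcases Sym2.eq_iff.1 h with ⟨rfl, -⟩ | ⟨rfl, -⟩ <;> exact hva rfl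
              simp [h1, hva])]
        simp
      rw [e1, e2]
    · have e1 : (∑ v : V, if v ∈ s(a, b) then 1 else 0) = 2 := by
        calc (∑ v : V, if v ∈ s(a, b) then 1 else 0)
            = (Finset.univ.filter (fun v => v ∈ s(a, b))).card :=
              (Finset.card_filter _ _).symm
          _ = ({a, b} : Finset V).card := by
              congr 1; ext v; simp [Sym2.mem_iff]
          _ = 2 := Finset.card_pair hab
      have e2 : (∑ v : V, if s(a, b) = s(v, v) then 1 else 0) = 0 := by
        apply Finset.sum_eq_zero
        intro v _
        rw [if_neg]
        intro h
        rcases Sym2.eq_iff.1 h with ⟨rfl, rfl⟩ | ⟨rfl, rfl⟩ <;> exact hab rfl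
      rw [e1, e2]

/-- Handshake lemma: the sum of all degrees is twice the number of edges. -/
lemma handshake (G : MGraph V E) (X : Set E) : ∑ v : V, deg G X v = 2 * X.ncard := by
  classical
  have hinc : ∀ v, (inc G X v).ncard = ∑ e : E, if e ∈ X ∧ v ∈ G.ends e then 1 else 0 := by
    intro v
    rw [← Finset.card_filter]
    rw [Set.ncard_eq_toFinset_card']
    congr 1
    ext e
    rw [Set.mem_toFinset]
    simp [inc]
  have hlp : ∀ v, (lp G X v).ncard = ∑ e : E, if e ∈ X ∧ G.ends e = s(v, v) then 1 else 0 := by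
    intro v
    rw [← Finset.card_filter]
    rw [Set.ncard_eq_toFinset_card']
    congr 1
    ext e
    rw [Set.mem_toFinset]
    simp [lp]
  have hX : X.ncard = ∑ e : E, if e ∈ X then 1 else 0 := by
    rw [← Finset.card_filter]
    rw [Set.ncard_eq_toFinset_card']
    congr 1
    ext e
    simp
  simp only [deg_def, hinc, hlp]
  rw [Finset.sum_add_distrib]
  have c1 := Finset.sum_comm (s := (Finset.univ : Finset V)) (t := (Finset.univ : Finset E))
    (f := fun v e => if e ∈ X ∧ v ∈ G.ends e then 1 else 0)
  have c2 := Finset.sum_comm (s := (Finset.univ : Finset V)) (t := (Finset.univ : Finset E))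
    (f := fun v e => if e ∈ X ∧ G.ends e = s(v, v) then 1 else 0)
  rw [c1, c2, ← Finset.sum_add_distrib, hX, Finset.mul_sum]
  apply Finset.sum_congr rfl
  intro e _
  by_cases he : e ∈ X
  · simp only [he, true_and, if_true]
    rw [mul_one]
    exact sym2_count (G.ends e)
  · simp [he]

lemma EAdj_symm (h : EAdj G X a b) : EAdj G X b a := by
  obtain ⟨ha, hb, v, h1, h2⟩ := h
  exact ⟨hb, ha, v, h2, h1⟩

lemma EAdj_mono (hXY : X ⊆ Y) (h : EAdj G X a b) : EAdj G Y a b := by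
  obtain ⟨ha, hb, v, h1, h2⟩ := h
  exact ⟨hXY ha, hXY hb, v, h1, h2⟩

lemma rtg_symm (h : Relation.ReflTransGen (EAdj G X) a b) :
    Relation.ReflTransGen (EAdj G X) b a := by
  induction h with
  | refl => exact .refl
  | tail _ h2 ih => exact (Relation.ReflTransGen.single (EAdj_symm h2)).trans ih

/-- Connected component (as an edge set) of `e` in `G[X]`. -/
def gcomp (G : MGraph V E) (X : Set E) (e : E) : Set E :=
  {f | f ∈ X ∧ Relation.ReflTransGen (EAdj G X) e f}

lemma mem_gcomp_self (he : e ∈ X) : e ∈ gcomp G X e := ⟨he, .refl⟩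

lemma gcomp_subset : gcomp G X e ⊆ X := fun _ hf => hf.1

lemma rtg_gcomp (h : Relation.ReflTransGen (EAdj G X) e f) :
    Relation.ReflTransGen (EAdj G (gcomp G X e)) e f := by
  induction h with
  | refl => exact .refl
  | tail h1 h2 ih =>
    rename_i c d
    exact ih.tail ⟨⟨h2.1, h1⟩, ⟨h2.2.1, h1.tail h2⟩, h2.2.2⟩

lemma gcomp_connOn : ConnOn G (gcomp G X e) := by
  intro a ha b hb
  exact (rtg_symm (rtg_gcomp ha.2)).trans (rtg_gcomp hb.2)

lemma gcomp_capture (hv : v ∈ VX G (gcomp G X e)) (hf : f ∈ X) (hvf : v ∈ G.ends f) :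
    f ∈ gcomp G X e := by
  obtain ⟨g, hg, hvg⟩ := hv
  exact ⟨hf, hg.2.tail ⟨hg.1, hf, v, hvg, hvf⟩⟩

lemma gcomp_eq_of_mem (hf : f ∈ gcomp G X e) : gcomp G X f = gcomp G X e := by
  ext g
  constructor
  · rintro ⟨hgX, hg⟩; exact ⟨hgX, hf.2.trans hg⟩
  · rintro ⟨hgX, hg⟩; exact ⟨hgX, (rtg_symm hf.2).trans hg⟩

lemma gcomp_eq_of_vx (hv1 : v ∈ VX G (gcomp G X e)) (hv2 : v ∈ VX G (gcomp G X f)) :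
    gcomp G X e = gcomp G X f := by
  obtain ⟨g, hg, hvg⟩ := hv2
  have hge : g ∈ gcomp G X e := gcomp_capture hv1 hg.1 hvg
  rw [← gcomp_eq_of_mem hge, gcomp_eq_of_mem hg]

lemma inc_gcomp (hv : v ∈ VX G (gcomp G X e)) : inc G (gcomp G X e) v = inc G X v := by
  ext f
  constructor
  · rintro ⟨hf, hvf⟩; exact ⟨hf.1, hvf⟩
  · rintro ⟨hf, hvf⟩; exact ⟨gcomp_capture hv hf hvf, hvf⟩

lemma lp_gcomp (hv : v ∈ VX G (gcomp G X e)) : lp G (gcomp G X e) v = lp G X v := by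
  ext f
  constructor
  · rintro ⟨hf, hvf⟩; exact ⟨hf.1, hvf⟩
  · rintro ⟨hf, hlf⟩
    refine ⟨gcomp_capture hv hf ?_, hlf⟩
    rw [hlf]; exact Sym2.mem_mk_left v v

lemma deg_gcomp (hv : v ∈ VX G (gcomp G X e)) : deg G (gcomp G X e) v = deg G X v := by
  rw [deg_def, deg_def, inc_gcomp hv, lp_gcomp hv]

lemma gcomp_transfer (he : e ∈ X) (hf : f ∈ X \ gcomp G X e) :
    gcomp G (X \ gcomp G X e) f = gcomp G X f := by
  set K := gcomp G X e with hK
  apply Set.Subset.antisymm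
  · rintro g ⟨⟨hgX, _⟩, hg⟩
    exact ⟨hgX, Relation.ReflTransGen.mono (fun a b h => EAdj_mono diff_subset h) _ _ hg⟩
  · rintro g ⟨hgX, hrtg⟩
    clear hgX
    induction hrtg with
    | refl => exact mem_gcomp_self hf
    | tail h1 h2 ih =>
      rename_i c d
      have hcK : c ∉ K := (ih.1).2
      have hdK : d ∉ K := by
        intro hdK2
        obtain ⟨hcX, hdX, v, hvc, hvd⟩ := h2
        exact hcK (gcomp_capture (mem_VX_of hdK2 hvd) hcX hvc)
      exact ⟨⟨h2.2.1, hdK⟩, ih.2.tail ⟨ih.1, ⟨h2.2.1, hdK⟩, h2.2.2⟩⟩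

lemma exists_min {P : Set E → Prop} {X : Set E} (hX : P X) :
    ∃ Y, Y ⊆ X ∧ P Y ∧ ∀ Z, Z ⊂ Y → ¬P Z := by
  obtain ⟨n, hn⟩ : ∃ n, X.ncard ≤ n := ⟨X.ncard, le_rfl⟩
  induction n generalizing X with
  | zero =>
    refine ⟨X, subset_rfl, hX, fun Z hZ hPZ => ?_⟩
    have := Set.ncard_lt_ncard hZ (Set.toFinite X)
    omega
  | succ n ih =>
    by_cases h : ∀ Z, Z ⊂ X → ¬P Z
    · exact ⟨X, subset_rfl, hX, h⟩
    · push_neg at h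
      obtain ⟨Z, hZX, hPZ⟩ := h
      obtain ⟨Y, h1, h2, h3⟩ :=
        ih hPZ (by have := Set.ncard_lt_ncard hZX (Set.toFinite X); omega)
      exact ⟨Y, h1.trans hZX.subset, h2, h3⟩

/-- A set of edges that can be destroyed by repeatedly removing pendant edges. -/
inductive Peelable (G : MGraph V E) : Set E → Prop
  | empty : Peelable G ∅
  | step {X : Set E} (e : E) (w : V) (he : e ∈ X) (hw : w ∈ G.ends e) (h1 : deg G X w = 1)
      (hp : Peelable G (X \ {e})) : Peelable G X

lemma ncard_ends (hnd : ¬(G.ends e).IsDiag) : ({x | x ∈ G.ends e} : Set V).ncard = 2 := by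
  generalize hS : G.ends e = S at hnd
  induction S using Sym2.ind with
  | _ x y =>
    have hxy : x ≠ y := by simpa [Sym2.mk_isDiag_iff] using hnd
    have h : {z | z ∈ s(x, y)} = ({x, y} : Set V) := by ext z; simp [Sym2.mem_iff]
    rw [h, Set.ncard_pair hxy]

lemma VX_single : VX G {e} = {x | x ∈ G.ends e} := by
  ext x
  constructor
  · rintro ⟨f, hf, hx⟩; rw [Set.mem_singleton_iff] at hf; subst hf; exact hx
  · intro hx; exact ⟨e, rfl, hx⟩

lemma peelable_bound (h : Peelable G X) : X.Nonempty → X.ncard + 1 ≤ (VX G X).ncard := by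
  induction h with
  | empty => intro h; simp at h
  | step e w he hw h1 hp ih =>
    intro hne
    rename_i X'
    have huniq := deg_one_unique h1 he hw
    have hwVX : w ∈ VX G X' := mem_VX_of he hw
    have hwout : w ∉ VX G (X' \ {e}) := by
      rintro ⟨f, ⟨hf1, hf2⟩, hwf⟩
      exact hf2 (huniq.1 f hf1 hwf)
    by_cases hXe : (X' \ {e}).Nonempty
    · have ihh := ih hXe
      have hsub : VX G (X' \ {e}) ⊆ VX G X' \ {w} := fun v hv =>
        ⟨VX_mono diff_subset hv, fun hvw => hwout (hvw ▸ hv)⟩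
      have hc1 : (VX G X' \ {w}).ncard = (VX G X').ncard - 1 :=
        Set.ncard_diff_singleton_of_mem hwVX
      have hc2 : (X' \ {e}).ncard = X'.ncard - 1 :=
        Set.ncard_diff_singleton_of_mem he
      have hc3 := Set.ncard_le_ncard hsub (Set.toFinite _)
      have hx1 : 1 ≤ X'.ncard := (Set.ncard_pos (Set.toFinite _)).2 hne
      have hv1 : 1 ≤ (VX G X').ncard := (Set.ncard_pos (Set.toFinite _)).2 ⟨w, hwVX⟩
      omega
    · have hXe' : X' = {e} := by
        apply Set.Subset.antisymm
        · intro f hf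
          by_contra hfe
          exact hXe ⟨f, hf, hfe⟩
        · simpa using he
      have hv : (VX G X').ncard = 2 := by
        rw [hXe', VX_single, ncard_ends huniq.2]
      have hx : X'.ncard = 1 := by rw [hXe', Set.ncard_singleton]
      omega

lemma core_or_peelable (G : MGraph V E) :
    ∀ (n : ℕ) (X : Set E), X.ncard ≤ n →
      (∃ Z, Z ⊆ X ∧ Z.Nonempty ∧ ∀ v ∈ VX G Z, 2 ≤ deg G Z v) ∨ Peelable G X := by
  intro n
  induction n with
  | zero =>
    intro X hX
    right
    have hX0 : X = ∅ := (Set.ncard_eq_zero (Set.toFinite _)).1 (by omega)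
    rw [hX0]; exact Peelable.empty
  | succ n ih =>
    intro X hX
    rcases Set.eq_empty_or_nonempty X with rfl | hne
    · exact Or.inr Peelable.empty
    by_cases hmin : ∀ v ∈ VX G X, 2 ≤ deg G X v
    · exact Or.inl ⟨X, subset_rfl, hne, hmin⟩
    push_neg at hmin
    obtain ⟨w, hwVX, hdlt⟩ := hmin
    have hd1 : deg G X w = 1 := by have := deg_pos_of_mem hwVX; omega
    obtain ⟨e, he, hwe⟩ := mem_VX_iff_inc.1 hwVX
    have hcard : (X \ {e}).ncard ≤ n := by
      have h1 := Set.ncard_diff_singleton_of_mem he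
      have h2 : 1 ≤ X.ncard := (Set.ncard_pos (Set.toFinite _)).2 ⟨e, he⟩
      omega
    rcases ih (X \ {e}) hcard with ⟨Z, hZ1, hZ2, hZ3⟩ | hpeel
    · exact Or.inl ⟨Z, hZ1.trans diff_subset, hZ2, hZ3⟩
    · exact Or.inr (Peelable.step e w he hwe hd1 hpeel)

lemma sum_deg_eq (G : MGraph V E) (X : Set E) :
    ∑ v ∈ (VX G X).toFinite.toFinset, deg G X v = 2 * X.ncard := by
  rw [← handshake G X]
  exact Finset.sum_subset (Finset.subset_univ _)
    (fun v _ hv => deg_eq_zero_of_not_mem (by simpa using hv))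

lemma sum_ge_two_add_one (s : Finset V) (f : V → ℕ) (hp : p ∈ s) (h3 : 3 ≤ f p)
    (h2 : ∀ v ∈ s, 2 ≤ f v) : 2 * s.card + 1 ≤ ∑ v ∈ s, f v := by
  classical
  have hsplit := (Finset.sum_sdiff (f := f) (Finset.singleton_subset_iff.2 hp))
  have b1 : ∑ _v ∈ s \ {p}, 2 ≤ ∑ v ∈ s \ {p}, f v :=
    Finset.sum_le_sum (fun v hv => h2 v (Finset.mem_sdiff.1 hv).1)
  rw [Finset.sum_const, smul_eq_mul] at b1
  have hc : (s \ {p}).card = s.card - 1 := by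
    rw [Finset.card_sdiff_of_subset (Finset.singleton_subset_iff.2 hp), Finset.card_singleton]
  have hs1 : 0 < s.card := Finset.card_pos.2 ⟨p, hp⟩
  have hsing : ∑ v ∈ ({p} : Finset V), f v = f p := Finset.sum_singleton _ _
  omega

lemma deg_single_le : deg G {e} v ≤ 2 := by
  rw [deg_def]
  have h1 : inc G {e} v ⊆ {e} := fun f hf => hf.1
  have h2 : lp G {e} v ⊆ {e} := fun f hf => hf.1
  have c1 := Set.ncard_le_ncard h1 (Set.toFinite _)
  have c2 := Set.ncard_le_ncard h2 (Set.toFinite _)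
  rw [Set.ncard_singleton] at c1 c2
  omega

lemma cyc_of_min_deg (hne : X.Nonempty) (hdeg : ∀ v ∈ VX G X, 2 ≤ deg G X v) :
    ∃ C, C ⊆ X ∧ IsCycle G C := by
  obtain ⟨Y, hYX, ⟨hYne, hYdeg⟩, hmin⟩ :=
    exists_min (P := fun S => S.Nonempty ∧ ∀ v ∈ VX G S, 2 ≤ deg G S v) ⟨hne, hdeg⟩
  by_cases h3 : ∃ p ∈ VX G Y, 3 ≤ deg G Y p
  · exfalso
    obtain ⟨pp, hp, hp3⟩ := h3
    obtain ⟨e, he, hpe⟩ := mem_VX_iff_inc.1 hp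
    rcases core_or_peelable G (Y \ {e}).ncard (Y \ {e}) le_rfl with ⟨Z, hZ1, hZ2, hZ3⟩ | hpeel
    · have hZY : Z ⊂ Y := by
        rw [Set.ssubset_def]
        exact ⟨hZ1.trans diff_subset, fun hYZ => (hZ1 (hYZ he)).2 rfl⟩
      exact hmin Z hZY ⟨hZ2, hZ3⟩
    · by_cases hYe : (Y \ {e}).Nonempty
      · have hb := peelable_bound hpeel hYe
        have hc2 : (Y \ {e}).ncard = Y.ncard - 1 :=
          Set.ncard_diff_singleton_of_mem he
        have hc3 : (VX G (Y \ {e})).ncard ≤ (VX G Y).ncard :=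
          Set.ncard_le_ncard (VX_mono diff_subset) (Set.toFinite _)
        have hy1 : 1 ≤ Y.ncard := (Set.ncard_pos (Set.toFinite _)).2 hYne
        have hsum := sum_deg_eq G Y
        have hlow := sum_ge_two_add_one ((VX G Y).toFinite.toFinset) (deg G Y)
          ((VX G Y).toFinite.mem_toFinset.2 hp) hp3
          (fun v hv => hYdeg v ((VX G Y).toFinite.mem_toFinset.1 hv))
        rw [Set.ncard_eq_toFinset_card (VX G Y) (VX G Y).toFinite] at hc3
        omega
      · have hY : Y = {e} := by
          apply Set.Subset.antisymm
          · intro f hf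
            by_contra hfe
            exact hYe ⟨f, hf, hfe⟩
          · simpa using he
        rw [hY] at hp3
        have := deg_single_le (G := G) (e := e) (v := pp)
        omega
  · push_neg at h3
    obtain ⟨e, he⟩ := hYne
    refine ⟨gcomp G Y e, gcomp_subset.trans hYX, ⟨e, mem_gcomp_self he⟩, gcomp_connOn, ?_⟩
    intro v hv
    rw [deg_gcomp hv]
    have hvY : v ∈ VX G Y := VX_mono gcomp_subset hv
    have ha := hYdeg v hvY
    have hb := h3 v hvY
    omega

lemma rtg_mono (hXY : X ⊆ Y) (h : Relation.ReflTransGen (EAdj G X) a b) :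
    Relation.ReflTransGen (EAdj G Y) a b :=
  Relation.ReflTransGen.mono (fun _ _ hh => EAdj_mono hXY hh) _ _ h

lemma sym2_exists_mem (S : Sym2 V) : ∃ w, w ∈ S := by
  induction S using Sym2.ind with | _ a b => exact ⟨a, Sym2.mem_mk_left a b⟩

lemma sym2_two {S : Sym2 V} (hnd : ¬S.IsDiag) : ∃ p q, p ≠ q ∧ S = s(p, q) := by
  induction S using Sym2.ind with
  | _ a b => exact ⟨a, b, by simpa [Sym2.mk_isDiag_iff] using hnd, rfl⟩

lemma sym2_other {S : Sym2 V} (hw : w ∈ S) {z z' : V} (hz : z ∈ S) (hzw : z ≠ w)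
    (hz' : z' ∈ S) (hz'w : z' ≠ w) : z = z' := by
  induction S using Sym2.ind with
  | _ a b =>
    rcases Sym2.mem_iff.1 hw with rfl | rfl
    · rcases Sym2.mem_iff.1 hz with rfl | rfl
      · exact absurd rfl hzw
      · rcases Sym2.mem_iff.1 hz' with rfl | rfl
        · exact absurd rfl hz'w
        · rfl
    · rcases Sym2.mem_iff.1 hz with rfl | rfl
      · rcases Sym2.mem_iff.1 hz' with rfl | rfl
        · rfl
        · exact absurd rfl hz'w
      · exact absurd rfl hzw

lemma deg_diff_single (he : e ∈ X) : deg G X v = deg G (X \ {e}) v + deg G {e} v := by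
  have hd : (X \ {e}) ∩ {e} = ∅ := by
    rw [Set.eq_empty_iff_forall_notMem]; rintro f ⟨hf1, hf2⟩; exact hf1.2 hf2
  have hu : (X \ {e}) ∪ {e} = X := by
    rw [Set.diff_union_self]
    exact Set.union_eq_self_of_subset_right (Set.singleton_subset_iff.2 he)
  conv_lhs => rw [← hu]
  rw [deg_union hd]

lemma deg_single_mem (hv : v ∈ G.ends e) (hnd : ¬(G.ends e).IsDiag) : deg G {e} v = 1 := by
  have h1 : inc G {e} v = {e} := by
    ext f
    constructor
    · rintro ⟨hf, -⟩; exact hf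
    · rintro rfl; exact ⟨rfl, hv⟩
  have h2 : lp G {e} v = ∅ := by
    rw [Set.eq_empty_iff_forall_notMem]
    rintro f ⟨hf, hlf⟩
    rw [Set.mem_singleton_iff] at hf; subst hf
    exact hnd (by rw [hlf]; exact Sym2.mk_isDiag_iff.2 rfl)
  rw [deg_def, h1, h2, Set.ncard_singleton, Set.ncard_empty]

lemma deg_single_not_mem (hv : v ∉ G.ends e) : deg G {e} v = 0 := by
  have h1 : inc G {e} v = ∅ := by
    rw [Set.eq_empty_iff_forall_notMem]
    rintro f ⟨hf, hvf⟩
    rw [Set.mem_singleton_iff] at hf; subst hf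
    exact hv hvf
  have h2 : lp G {e} v = ∅ := by
    rw [Set.eq_empty_iff_forall_notMem]
    intro f hf
    exact absurd (h1 ▸ lp_subset_inc hf) (Set.notMem_empty f)
  rw [deg_def, h1, h2, Set.ncard_empty]

/-- Workhorse: removing an edge keeps connectivity if all neighbours of `e` can be
rejoined in `X \ {e}`. -/
lemma connOn_diff (hX : ConnOn G X) (he : e ∈ X)
    (H : ∀ x, x ∈ X \ {e} → ∀ y, y ∈ X \ {e} →
      (∃ v, v ∈ G.ends e ∧ v ∈ G.ends x) → (∃ v, v ∈ G.ends e ∧ v ∈ G.ends y) →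
      Relation.ReflTransGen (EAdj G (X \ {e})) x y) :
    ConnOn G (X \ {e}) := by
  intro a ha b hb
  have key : ∀ b', Relation.ReflTransGen (EAdj G X) a b' →
      (b' ≠ e → Relation.ReflTransGen (EAdj G (X \ {e})) a b') ∧
      (b' = e → ∃ c, c ∈ X \ {e} ∧ Relation.ReflTransGen (EAdj G (X \ {e})) a c ∧
        ∃ v, v ∈ G.ends e ∧ v ∈ G.ends c) := by
    intro b' hb'
    induction hb' with
    | refl => exact ⟨fun _ => .refl, fun hae => absurd (Set.mem_singleton_iff.2 hae) ha.2⟩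
    | tail h1 h2 ih =>
      rename_i c d
      constructor
      · intro hde
        by_cases hce : c = e
        · obtain ⟨c', hc', hac', v', hv'e, hv'c'⟩ := ih.2 hce
          rw [hce] at h2
          obtain ⟨-, hdX, v, hve, hvd⟩ := h2
          exact hac'.trans (H c' hc' d ⟨hdX, fun h => hde (Set.mem_singleton_iff.1 h)⟩
            ⟨v', hv'e, hv'c'⟩ ⟨v, hve, hvd⟩)
        · obtain ⟨hcX, hdX, v, hvc, hvd⟩ := h2
          exact (ih.1 hce).tail ⟨⟨hcX, fun h => hce (Set.mem_singleton_iff.1 h)⟩,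
            ⟨hdX, fun h => hde (Set.mem_singleton_iff.1 h)⟩, v, hvc, hvd⟩
      · intro hde2
        by_cases hce : c = e
        · exact ih.2 hce
        · rw [hde2] at h2
          obtain ⟨hcX, -, v, hvc, hve⟩ := h2
          exact ⟨c, ⟨hcX, fun h => hce (Set.mem_singleton_iff.1 h)⟩, ih.1 hce, v, hve, hvc⟩
  refine (key b (hX a ha.1 b hb.1)).1 (fun h => hb.2 (Set.mem_singleton_iff.2 h))

lemma connOn_diff_pendant (hX : ConnOn G X) (he : e ∈ X) (hw : w ∈ G.ends e)
    (h1 : deg G X w = 1) : ConnOn G (X \ {e}) := by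
  have huniq := deg_one_unique h1 he hw
  apply connOn_diff hX he
  rintro x hx y hy ⟨v1, hv1e, hv1x⟩ ⟨v2, hv2e, hv2y⟩
  have hv1w : v1 ≠ w := fun h => hx.2 (Set.mem_singleton_iff.2 (huniq.1 x hx.1 (h ▸ hv1x)))
  have hv2w : v2 ≠ w := fun h => hy.2 (Set.mem_singleton_iff.2 (huniq.1 y hy.1 (h ▸ hv2y)))
  have hv12 : v1 = v2 := sym2_other hw hv1e hv1w hv2e hv2w
  exact Relation.ReflTransGen.single ⟨hx, hy, v1, hv1x, hv12 ▸ hv2y⟩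

lemma connOn_diff_loop (hX : ConnOn G X) (he : e ∈ X) (hd : (G.ends e).IsDiag) :
    ConnOn G (X \ {e}) := by
  obtain ⟨w, hw⟩ := sym2_exists_mem (G.ends e)
  have hS := diag_eq_of_mem hd hw
  apply connOn_diff hX he
  rintro x hx y hy ⟨v1, hv1e, hv1x⟩ ⟨v2, hv2e, hv2y⟩
  have h1 : v1 = w := by rw [hS] at hv1e; simpa using hv1e
  have h2 : v2 = w := by rw [hS] at hv2e; simpa using hv2e
  exact Relation.ReflTransGen.single ⟨hx, hy, w, h1 ▸ hv1x, h2 ▸ hv2y⟩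

lemma cycle_loop_eq (hC : IsCycle G C) (he : e ∈ C) (hd : (G.ends e).IsDiag) : C = {e} := by
  obtain ⟨w, hw⟩ := sym2_exists_mem (G.ends e)
  have hS := diag_eq_of_mem hd hw
  have hdeg := hC.2.2 w (mem_VX_of he hw)
  have honly : ∀ f, f ∈ C → w ∈ G.ends f → f = e := by
    intro f hf hwf
    by_contra hfe
    have hsub : {e, f} ⊆ inc G C w := by
      rintro g (rfl | rfl); exacts [⟨he, hw⟩, ⟨hf, hwf⟩]
    have hp : ({e, f} : Set E).ncard = 2 := Set.ncard_pair (fun h => hfe h.symm)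
    have h2 : 2 ≤ (inc G C w).ncard := by
      have := Set.ncard_le_ncard hsub (Set.toFinite _)
      omega
    have h1 : 1 ≤ (lp G C w).ncard := (Set.ncard_pos (Set.toFinite _)).2 ⟨e, he, hS⟩
    rw [deg_def] at hdeg
    omega
  apply Set.Subset.antisymm
  · intro f hf
    have hrtg := hC.2.1 e he f hf
    have hkey : ∀ g, Relation.ReflTransGen (EAdj G C) e g → g = e := by
      intro g hg
      induction hg with
      | refl => rfl
      | tail h1 h2 ih =>
        rename_i c d
        subst ih
        obtain ⟨-, hdC, v, hvc, hvd⟩ := h2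
        have hvw : v = w := by rw [hS] at hvc; simpa using hvc
        exact honly d hdC (hvw ▸ hvd)
    exact Set.mem_singleton_iff.2 (hkey f hrtg)
  · simpa using he

lemma cycle_other_edge (hC : IsCycle G C) (he : e ∈ C) (hve : v ∈ G.ends e)
    (hnd : ¬(G.ends e).IsDiag) : ∃ f, f ∈ C ∧ f ≠ e ∧ v ∈ G.ends f := by
  have hdeg := hC.2.2 v (mem_VX_of he hve)
  by_contra hno
  push_neg at hno
  have hinc : inc G C v = {e} := by
    apply Set.Subset.antisymm
    · rintro f ⟨hf, hvf⟩
      rw [Set.mem_singleton_iff]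
      by_contra hfe
      exact hno f hf hfe hvf
    · rintro f rfl
      exact ⟨he, hve⟩
  have hlp : lp G C v = ∅ := by
    rw [Set.eq_empty_iff_forall_notMem]
    intro f hf
    have hfinc := hinc ▸ lp_subset_inc hf
    rw [Set.mem_singleton_iff] at hfinc
    subst hfinc
    exact hnd (by rw [hf.2]; exact Sym2.mk_isDiag_iff.2 rfl)
  rw [deg_def, hinc, hlp, Set.ncard_singleton, Set.ncard_empty] at hdeg
  omega

lemma rtg_pred (h : Relation.ReflTransGen (EAdj G X) a b) (hab : a ≠ b) :
    ∃ g, g ∈ X ∧ g ≠ b ∧ ∃ v, v ∈ G.ends g ∧ v ∈ G.ends b := by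
  induction h with
  | refl => exact absurd rfl hab
  | tail h1 h2 ih =>
    rename_i c d
    by_cases hcd : c = d
    · subst hcd; exact ih hab
    · obtain ⟨hcX, hdX, v, hvc, hvd⟩ := h2
      exact ⟨c, hcX, hcd, v, hvc, hvd⟩

lemma connOn_diff_cycle (hX : ConnOn G X) (hC : IsCycle G C) (hCX : C ⊆ X) (he : e ∈ C) :
    ConnOn G (X \ {e}) := by
  classical
  by_cases hd : (G.ends e).IsDiag
  · exact connOn_diff_loop hX (hCX he) hd
  obtain ⟨p, q, hpq, hS⟩ := sym2_two hd
  have hpe : p ∈ G.ends e := by rw [hS]; exact Sym2.mem_mk_left p q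
  have hqe : q ∈ G.ends e := by rw [hS]; exact Sym2.mem_mk_right p q
  obtain ⟨zp, hzpC, hzpe, hpzp⟩ := cycle_other_edge hC he hpe hd
  obtain ⟨zq, hzqC, hzqe, hqzq⟩ := cycle_other_edge hC he hqe hd
  set k := gcomp G (C \ {e}) zp with hk
  have hzpk : zp ∈ k := mem_gcomp_self ⟨hzpC, fun h => hzpe (Set.mem_singleton_iff.1 h)⟩
  have hq : q ∈ VX G k := by
    by_contra hqk
    have hpk : p ∈ VX G k := mem_VX_of hzpk hpzp
    have hdegk : ∀ v', v' ∈ VX G k → deg G k v' = if v' = p then 1 else 2 := by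
      intro v' hv'
      have h1 : deg G k v' = deg G (C \ {e}) v' := deg_gcomp hv'
      have hv'C : v' ∈ VX G C := VX_mono (gcomp_subset.trans diff_subset) hv'
      have h2 : deg G C v' = deg G (C \ {e}) v' + deg G {e} v' := deg_diff_single he
      have hdC := hC.2.2 v' hv'C
      by_cases hv'p : v' = p
      · subst hv'p
        rw [deg_single_mem hpe hd] at h2
        rw [if_pos rfl, h1]
        omega
      · have hv'q : v' ≠ q := fun h => hqk (h ▸ hv')
        have hv'e : v' ∉ G.ends e := by
          rw [hS]
          intro hmem
          rcases Sym2.mem_iff.1 hmem with h | h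
          exacts [hv'p h, hv'q h]
        rw [deg_single_not_mem hv'e] at h2
        rw [if_neg hv'p, h1]
        omega
    have hsum := sum_deg_eq G k
    set F := (VX G k).toFinite.toFinset with hF
    have hpF : p ∈ F := (VX G k).toFinite.mem_toFinset.2 hpk
    have hcomp : ∑ v' ∈ F, deg G k v' = 2 * F.card - 1 := by
      rw [← Finset.sum_sdiff (Finset.singleton_subset_iff.2 hpF)]
      have e1 : ∑ v' ∈ F \ {p}, deg G k v' = ∑ _v' ∈ F \ {p}, 2 :=
        Finset.sum_congr rfl (fun v' hv' => by
          rw [hdegk v' ((VX G k).toFinite.mem_toFinset.1 (Finset.mem_sdiff.1 hv').1),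
            if_neg (by simpa using (Finset.mem_sdiff.1 hv').2)])
      have e2 : ∑ v' ∈ ({p} : Finset V), deg G k v' = 1 := by
        rw [Finset.sum_singleton, hdegk p hpk, if_pos rfl]
      rw [e1, e2, Finset.sum_const, smul_eq_mul,
        Finset.card_sdiff_of_subset (Finset.singleton_subset_iff.2 hpF), Finset.card_singleton]
      have : 1 ≤ F.card := Finset.card_pos.2 ⟨p, hpF⟩
      omega
    have hFc : (VX G k).ncard = F.card := Set.ncard_eq_toFinset_card _ _
    have hcard1 : 1 ≤ F.card := Finset.card_pos.2 ⟨p, hpF⟩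
    omega
  obtain ⟨zq', hzq'k, hqzq'⟩ := hq
  apply connOn_diff hX (hCX he)
  have hkX : k ⊆ X \ {e} := by
    intro g hg
    have := gcomp_subset hg
    exact ⟨hCX this.1, this.2⟩
  have hconn_zp_zq' : Relation.ReflTransGen (EAdj G (X \ {e})) zp zq' :=
    Relation.ReflTransGen.mono (fun _ _ hh => EAdj_mono hkX hh) _ _
      (gcomp_connOn zp hzpk zq' hzq'k)
  have hstep : ∀ x', x' ∈ X \ {e} → ∀ v', v' ∈ G.ends e → v' ∈ G.ends x' →
      Relation.ReflTransGen (EAdj G (X \ {e})) x' zq' := by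
    intro x' hx' v' hv'e hv'x'
    have hv'pq : v' = p ∨ v' = q := by rw [hS] at hv'e; exact Sym2.mem_iff.1 hv'e
    rcases hv'pq with rfl | rfl
    · exact (Relation.ReflTransGen.single ⟨hx', hkX hzpk, v', hv'x', hpzp⟩).trans hconn_zp_zq'
    · exact Relation.ReflTransGen.single ⟨hx', hkX hzq'k, v', hv'x', hqzq'⟩
  rintro x hx y hy ⟨v1, hv1e, hv1x⟩ ⟨v2, hv2e, hv2y⟩
  exact (hstep x hx v1 hv1e hv1x).trans (rtg_symm (hstep y hy v2 hv2e hv2y))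

lemma sum_ge_two_sub (s t : Finset V) (f : V → ℕ) (hts : t ⊆ s)
    (h1 : ∀ v ∈ t, 1 ≤ f v) (h2 : ∀ v ∈ s, v ∉ t → 2 ≤ f v) :
    2 * s.card ≤ (∑ v ∈ s, f v) + t.card := by
  classical
  have hsplit := Finset.sum_sdiff (f := f) hts
  have b1 : ∑ _v ∈ s \ t, 2 ≤ ∑ v ∈ s \ t, f v :=
    Finset.sum_le_sum (fun v hv => h2 v (Finset.mem_sdiff.1 hv).1 (Finset.mem_sdiff.1 hv).2)
  have b2 : ∑ _v ∈ t, 1 ≤ ∑ v ∈ t, f v := Finset.sum_le_sum h1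
  rw [Finset.sum_const, smul_eq_mul] at b1
  rw [Finset.sum_const, smul_eq_mul] at b2
  have hc : (s \ t).card = s.card - t.card := Finset.card_sdiff_of_subset hts
  have hle := Finset.card_le_card hts
  omega

/-- F5: a connected edge set containing a cycle has at least as many edges as vertices. -/
lemma conn_cyclic_bound : ∀ (n : ℕ) (X : Set E), X.ncard ≤ n → ConnOn G X → X.Nonempty →
    (∃ C, C ⊆ X ∧ IsCycle G C) → (VX G X).ncard ≤ X.ncard := by
  intro n
  induction n with
  | zero =>
    intro X hn _ hne _
    have := (Set.ncard_pos (Set.toFinite _)).2 hne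
    omega
  | succ n ih =>
    rintro X hn hcon hne ⟨C, hCX, hC⟩
    by_cases hmin : ∀ v ∈ VX G X, 2 ≤ deg G X v
    · have hsum := sum_deg_eq G X
      set F := (VX G X).toFinite.toFinset with hF
      have hlow : ∑ _v ∈ F, 2 ≤ ∑ v ∈ F, deg G X v :=
        Finset.sum_le_sum (fun v hv => hmin v ((VX G X).toFinite.mem_toFinset.1 hv))
      rw [Finset.sum_const, smul_eq_mul] at hlow
      have hFc : (VX G X).ncard = F.card := Set.ncard_eq_toFinset_card _ _
      omega
    · push_neg at hmin
      obtain ⟨w, hwVX, hdlt⟩ := hmin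
      have hd1 : deg G X w = 1 := by have := deg_pos_of_mem hwVX; omega
      obtain ⟨e, he, hwe⟩ := mem_VX_iff_inc.1 hwVX
      have huniq := deg_one_unique hd1 he hwe
      have heC : e ∉ C := by
        intro heC2
        have hdC := hC.2.2 w (mem_VX_of heC2 hwe)
        have hmono := deg_mono (G := G) (v := w) hCX
        omega
      have hCXe : C ⊆ X \ {e} := fun c hc =>
        ⟨hCX hc, fun h => heC (Set.mem_singleton_iff.1 h ▸ hc)⟩
      have hconn' := connOn_diff_pendant hcon he hwe hd1
      obtain ⟨c0, hc0⟩ := hC.1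
      have hXe_ne : (X \ {e}).Nonempty := ⟨c0, hCXe hc0⟩
      have hcn : (X \ {e}).ncard = X.ncard - 1 :=
        Set.ncard_diff_singleton_of_mem he
      have hx1 : 1 ≤ X.ncard := (Set.ncard_pos (Set.toFinite _)).2 hne
      have ihh := ih (X \ {e}) (by omega) hconn' hXe_ne ⟨C, hCXe, hC⟩
      have hcov : VX G X \ {w} ⊆ VX G (X \ {e}) := by
        rintro v ⟨⟨fv, hfv, hvfv⟩, hvw⟩
        by_cases hfe : fv = e
        · subst hfe
          have hvw' : v ≠ w := by simpa using hvw
          obtain ⟨g, hgX, hge, v', hv'g, hv'e⟩ :=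
            rtg_pred (hcon c0 (hCX hc0) fv hfv) (fun h => heC (h ▸ hc0))
          have hv'w : v' ≠ w := fun h => hge (huniq.1 g hgX (h ▸ hv'g))
          have hv'v : v' = v := sym2_other hwe hv'e hv'w hvfv hvw'
          exact ⟨g, ⟨hgX, fun h => hge (Set.mem_singleton_iff.1 h)⟩, hv'v ▸ hv'g⟩
        · exact ⟨fv, ⟨hfv, fun h => hfe (Set.mem_singleton_iff.1 h)⟩, hvfv⟩
      have hc2 := Set.ncard_le_ncard hcov (Set.toFinite _)
      have hc3 : (VX G X \ {w}).ncard = (VX G X).ncard - 1 :=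
        Set.ncard_diff_singleton_of_mem hwVX
      have hv1 : 1 ≤ (VX G X).ncard := (Set.ncard_pos (Set.toFinite _)).2 ⟨w, hwVX⟩
      omega

/-- F1': an acyclic nonempty edge set has fewer edges than vertices. -/
lemma acyclic_bound (hA : Acyclic G X) (hne : X.Nonempty) :
    X.ncard + 1 ≤ (VX G X).ncard := by
  rcases core_or_peelable G X.ncard X le_rfl with ⟨Z, hZ1, hZ2, hZ3⟩ | hpeel
  · obtain ⟨C, hCZ, hC⟩ := cyc_of_min_deg hZ2 hZ3
    exact absurd hC (hA C (hCZ.trans hZ1))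
  · exact peelable_bound hpeel hne

lemma exists_cycle_of_many (h : (VX G X).ncard ≤ X.ncard) (hne : X.Nonempty) :
    ∃ C, C ⊆ X ∧ IsCycle G C := by
  by_contra hno
  push_neg at hno
  have hA : Acyclic G X := fun C hCX => hno C hCX
  have := acyclic_bound hA hne
  omega

/-- F6: strictly more edges than vertices gives two distinct cycles. -/
lemma two_cycles_of_more (h : (VX G X).ncard + 1 ≤ X.ncard) :
    ∃ C₁ C₂, C₁ ⊆ X ∧ C₂ ⊆ X ∧ IsCycle G C₁ ∧ IsCycle G C₂ ∧ C₁ ≠ C₂ := by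
  have hne : X.Nonempty := (Set.ncard_pos (Set.toFinite _)).1 (by omega)
  obtain ⟨C₁, hC₁X, hC₁⟩ := exists_cycle_of_many (G := G) (by omega) hne
  obtain ⟨e, he⟩ := hC₁.1
  by_cases hA : Acyclic G (X \ {e})
  · exfalso
    by_cases hXe : (X \ {e}).Nonempty
    · have hb := acyclic_bound hA hXe
      have h1 : (X \ {e}).ncard = X.ncard - 1 :=
        Set.ncard_diff_singleton_of_mem (hC₁X he)
      have h2 : (VX G (X \ {e})).ncard ≤ (VX G X).ncard :=
        Set.ncard_le_ncard (VX_mono diff_subset) (Set.toFinite _)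
      have hx1 : 1 ≤ X.ncard := (Set.ncard_pos (Set.toFinite _)).2 hne
      omega
    · have hX1 : X = {e} := by
        apply Set.Subset.antisymm
        · intro f hf
          by_contra hfe
          exact hXe ⟨f, hf, hfe⟩
        · simpa using hC₁X he
      have hv1 : 1 ≤ (VX G ({e} : Set E)).ncard := by
        obtain ⟨w, hw⟩ := sym2_exists_mem (G.ends e)
        exact (Set.ncard_pos (Set.toFinite _)).2 ⟨w, mem_VX_of rfl hw⟩
      rw [hX1, Set.ncard_singleton] at h
      omega
  · rw [Acyclic] at hA
    push_neg at hA
    obtain ⟨C₂, hC₂sub, hC₂c⟩ := hA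
    exact ⟨C₁, C₂, hC₁X, hC₂sub.trans diff_subset, hC₁, hC₂c,
      fun hEq => (hC₂sub (hEq ▸ he)).2 rfl⟩

lemma cycles_eq_core (hX : ConnOn G X) (hcard : X.ncard ≤ (VX G X).ncard)
    (hC1 : IsCycle G C) (hC1X : C ⊆ X) (hC2 : IsCycle G Z) (hC2X : Z ⊆ X)
    (he : e ∈ C) (heZ : e ∉ Z) : False := by
  have hconn' := connOn_diff_cycle hX hC1 hC1X he
  obtain ⟨z0, hz0⟩ := hC2.1
  have hZsub : Z ⊆ X \ {e} := fun c hc =>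
    ⟨hC2X hc, fun h => heZ (Set.mem_singleton_iff.1 h ▸ hc)⟩
  have hXe_ne : (X \ {e}).Nonempty := ⟨z0, hZsub hz0⟩
  have hcov : VX G X ⊆ VX G (X \ {e}) := by
    rintro v ⟨fv, hfv, hvfv⟩
    by_cases hfe : fv = e
    · subst hfe
      by_cases hd : (G.ends fv).IsDiag
      · have hz0e : z0 ≠ fv := fun h => heZ (h ▸ hz0)
        obtain ⟨g, hgX, hge, v', hv'g, hv'e⟩ :=
          rtg_pred (hX z0 (hC2X hz0) fv (hC1X he)) hz0e
        have hv'v : v' = v := by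
          rw [diag_eq_of_mem hd hvfv] at hv'e
          simpa using hv'e
        exact ⟨g, ⟨hgX, fun h => hge (Set.mem_singleton_iff.1 h)⟩, hv'v ▸ hv'g⟩
      · obtain ⟨g, hgC, hge, hvg⟩ := cycle_other_edge hC1 he hvfv hd
        exact ⟨g, ⟨hC1X hgC, fun h => hge (Set.mem_singleton_iff.1 h)⟩, hvg⟩
    · exact ⟨fv, ⟨hfv, fun h => hfe (Set.mem_singleton_iff.1 h)⟩, hvfv⟩
  have hF5 := conn_cyclic_bound (X \ {e}).ncard (X \ {e}) le_rfl hconn' hXe_ne ⟨Z, hZsub, hC2⟩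
  have h1 : (X \ {e}).ncard = X.ncard - 1 :=
    Set.ncard_diff_singleton_of_mem (hC1X he)
  have h2 := Set.ncard_le_ncard hcov (Set.toFinite _)
  have hx1 : 1 ≤ X.ncard := (Set.ncard_pos (Set.toFinite _)).2 ⟨e, hC1X he⟩
  omega

/-- F7: in a connected edge set with at most as many edges as vertices, all cycles agree. -/
lemma cycles_eq (hX : ConnOn G X) (hcard : X.ncard ≤ (VX G X).ncard)
    (hC1 : IsCycle G C) (hC1X : C ⊆ X) (hC2 : IsCycle G Z) (hC2X : Z ⊆ X) : C = Z := by
  by_contra hne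
  have hdiff : (∃ e, e ∈ C ∧ e ∉ Z) ∨ (∃ e, e ∈ Z ∧ e ∉ C) := by
    by_contra hcon
    push_neg at hcon
    exact hne (Set.Subset.antisymm hcon.1 hcon.2)
  rcases hdiff with ⟨e, h1, h2⟩ | ⟨e, h1, h2⟩
  · exact cycles_eq_core hX hcard hC1 hC1X hC2 hC2X h1 h2
  · exact cycles_eq_core hX hcard hC2 hC2X hC1 hC1X h1 h2

/-- `X` has no connected subset containing two distinct cycles. -/
def Good (G : MGraph V E) (X : Set E) : Prop :=
  ∀ Y, Y ⊆ X → ¬(ConnOn G Y ∧ TwoCycles G Y)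

lemma good_mono (h : Good G X) (hYX : Y ⊆ X) : Good G Y := fun Z hZ => h Z (hZ.trans hYX)

lemma bicycle_of_conn_two (h : ConnOn G X ∧ TwoCycles G X) : ∃ Z, Z ⊆ X ∧ IsBicycle G Z := by
  obtain ⟨Y, hYX, hPY, hmin⟩ := exists_min (P := fun S => ConnOn G S ∧ TwoCycles G S) h
  exact ⟨Y, hYX, hPY, hmin⟩

lemma good_iff_no_bicycle : Good G X ↔ ∀ Z, Z ⊆ X → ¬IsBicycle G Z := by
  constructor
  · intro h Z hZX hZ
    exact h Z hZX hZ.1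
  · intro h Y hYX hY
    obtain ⟨Z, hZY, hZ⟩ := bicycle_of_conn_two hY
    exact h Z (hZY.trans hYX) hZ

lemma good_comp_bound (hg : Good G X) (he : e ∈ X) :
    (gcomp G X e).ncard ≤ (VX G (gcomp G X e)).ncard := by
  by_contra hlt
  push_neg at hlt
  obtain ⟨C₁, C₂, h1, h2, h3, h4, h5⟩ := two_cycles_of_more (G := G) (X := gcomp G X e) (by omega)
  exact hg (gcomp G X e) gcomp_subset ⟨gcomp_connOn, C₁, C₂, h1, h2, h3, h4, h5⟩

lemma vx_disjoint_comp_rest (hw : w ∈ VX G (gcomp G X e)) (hw2 : w ∈ VX G (X \ gcomp G X e)) :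
    False := by
  obtain ⟨f, hf, hvf⟩ := hw2
  exact hf.2 (gcomp_capture hw hf.1 hvf)

lemma vx_split (he : e ∈ X) :
    VX G X = VX G (gcomp G X e) ∪ VX G (X \ gcomp G X e) := by
  have h1 : X = gcomp G X e ∪ (X \ gcomp G X e) := (Set.union_diff_cancel gcomp_subset).symm
  conv_lhs => rw [h1]
  exact VX_union

lemma vx_split_card (he : e ∈ X) :
    (VX G X).ncard = (VX G (gcomp G X e)).ncard + (VX G (X \ gcomp G X e)).ncard := by
  rw [vx_split he, Set.ncard_union_eq (Set.disjoint_left.2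
    (fun {w} hw hw2 => vx_disjoint_comp_rest hw hw2)) (Set.toFinite _) (Set.toFinite _)]

lemma ncard_split (he : e ∈ X) :
    X.ncard = (gcomp G X e).ncard + (X \ gcomp G X e).ncard := by
  have h1 : (X \ gcomp G X e).ncard = X.ncard - (gcomp G X e).ncard :=
    Set.ncard_diff gcomp_subset (Set.toFinite _)
  have h2 : (gcomp G X e).ncard ≤ X.ncard := Set.ncard_le_ncard gcomp_subset (Set.toFinite _)
  omega

/-- P1: a Good set has at most as many edges as covered vertices. -/
lemma good_bound : ∀ (n : ℕ) (X : Set E), X.ncard ≤ n → Good G X →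
    X.ncard ≤ (VX G X).ncard := by
  intro n
  induction n with
  | zero => intro X h _; omega
  | succ n ih =>
    intro X hn hg
    rcases Set.eq_empty_or_nonempty X with rfl | ⟨e, he⟩
    · simp
    have hKne : 1 ≤ (gcomp G X e).ncard :=
      (Set.ncard_pos (Set.toFinite _)).2 ⟨e, mem_gcomp_self he⟩
    have hsplit := ncard_split (G := G) he
    have hvsplit := vx_split_card (G := G) he
    have ihh := ih (X \ gcomp G X e) (by omega) (good_mono hg diff_subset)
    have hKb := good_comp_bound hg he
    omega

/-- The set of vertices of degree 1 in `X`. -/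
def DD (G : MGraph V E) (X : Set E) : Set V := {w | w ∈ VX G X ∧ deg G X w = 1}

lemma dd_subset_vx : DD G X ⊆ VX G X := fun _ h => h.1

/-- Universal counting bound via the handshake lemma. -/
lemma deg_sum_bound (G : MGraph V E) (X : Set E) :
    2 * (VX G X).ncard ≤ 2 * X.ncard + (DD G X).ncard := by
  classical
  have hsum := sum_deg_eq G X
  set F := (VX G X).toFinite.toFinset with hF
  set T := (DD G X).toFinite.toFinset with hT
  have hTF : T ⊆ F := by
    intro v hv
    exact (VX G X).toFinite.mem_toFinset.2 (dd_subset_vx ((DD G X).toFinite.mem_toFinset.1 hv))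
  have hb := sum_ge_two_sub F T (deg G X) hTF
    (fun v hv => by
      have := ((DD G X).toFinite.mem_toFinset.1 hv).2
      omega)
    (fun v hvF hvT => by
      have h1 := deg_pos_of_mem ((VX G X).toFinite.mem_toFinset.1 hvF)
      have h2 : deg G X v ≠ 1 := by
        intro hdeg
        exact hvT ((DD G X).toFinite.mem_toFinset.2
          ⟨(VX G X).toFinite.mem_toFinset.1 hvF, hdeg⟩)
      omega)
  have hFc : (VX G X).ncard = F.card := Set.ncard_eq_toFinset_card _ _
  have hTc : (DD G X).ncard = T.card := Set.ncard_eq_toFinset_card _ _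
  omega

lemma vx_diff_cycle_edge (hX : ConnOn G X) (hC1 : IsCycle G C) (hC1X : C ⊆ X)
    (he : e ∈ C) (hother : ∃ z, z ∈ X ∧ z ≠ e) : VX G X ⊆ VX G (X \ {e}) := by
  rintro v ⟨fv, hfv, hvfv⟩
  by_cases hfe : fv = e
  · subst hfe
    by_cases hd : (G.ends fv).IsDiag
    · obtain ⟨z0, hz0X, hz0e⟩ := hother
      obtain ⟨g, hgX, hge, v', hv'g, hv'e⟩ := rtg_pred (hX z0 hz0X fv hfv) hz0e
      have hv'v : v' = v := by
        rw [diag_eq_of_mem hd hvfv] at hv'e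
        simpa using hv'e
      exact ⟨g, ⟨hgX, fun h => hge (Set.mem_singleton_iff.1 h)⟩, hv'v ▸ hv'g⟩
    · obtain ⟨g, hgC, hge, hvg⟩ := cycle_other_edge hC1 he hvfv hd
      exact ⟨g, ⟨hC1X hgC, fun h => hge (Set.mem_singleton_iff.1 h)⟩, hvg⟩
  · exact ⟨fv, ⟨hfv, fun h => hfe (Set.mem_singleton_iff.1 h)⟩, hvfv⟩

/-- Spanning unicyclic subset of a component containing a cycle. -/
lemma comp_spanning (he : e ∈ X) (hcyc : ∃ C, C ⊆ gcomp G X e ∧ IsCycle G C) :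
    ∃ I, I ⊆ gcomp G X e ∧ Good G I ∧ I.ncard = (VX G (gcomp G X e)).ncard := by
  set K := gcomp G X e with hK
  obtain ⟨Y, hYK, ⟨hYconn, hYvx, hYcyc⟩, hmin⟩ :=
    exists_min (P := fun S => ConnOn G S ∧ VX G S = VX G K ∧ ∃ C, C ⊆ S ∧ IsCycle G C)
      ⟨gcomp_connOn, rfl, hcyc⟩
  obtain ⟨C, hCY, hC⟩ := hYcyc
  obtain ⟨c0, hc0⟩ := hC.1
  have hYne : Y.Nonempty := ⟨c0, hCY hc0⟩
  have hge : (VX G K).ncard ≤ Y.ncard := by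
    have h := conn_cyclic_bound Y.ncard Y le_rfl hYconn hYne ⟨C, hCY, hC⟩
    rwa [hYvx] at h
  have hcase : ∀ D₁ D₂, D₁ ⊆ Y → D₂ ⊆ Y → IsCycle G D₁ → IsCycle G D₂ →
      ∀ e', e' ∈ D₁ → e' ∉ D₂ → False := by
    intro D₁ D₂ hD₁ hD₂ hc₁ hc₂ e' he'1 he'2
    obtain ⟨z1, hz1⟩ := hc₂.1
    have hconn' := connOn_diff_cycle hYconn hc₁ hD₁ he'1
    have hsub2 : D₂ ⊆ Y \ {e'} := fun c hc =>
      ⟨hD₂ hc, fun h => he'2 (Set.mem_singleton_iff.1 h ▸ hc)⟩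
    have hcov := vx_diff_cycle_edge hYconn hc₁ hD₁ he'1
      ⟨z1, hD₂ hz1, fun h => he'2 (h ▸ hz1)⟩
    have hvx' : VX G (Y \ {e'}) = VX G K := by
      apply Set.Subset.antisymm
      · exact (hYvx ▸ VX_mono diff_subset)
      · exact fun v hv => hcov (hYvx ▸ hv)
    exact hmin (Y \ {e'}) (Set.sdiff_singleton_ssubset.2 (hD₁ he'1))
      ⟨hconn', hvx', D₂, hsub2, hc₂⟩
  have hle : Y.ncard ≤ (VX G K).ncard := by
    by_contra hlt
    push_neg at hlt
    obtain ⟨C₁, C₂, h1, h2, h3, h4, h5⟩ :=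
      two_cycles_of_more (X := Y) (by rw [hYvx]; omega)
    have hdiff : (∃ e', e' ∈ C₁ ∧ e' ∉ C₂) ∨ (∃ e', e' ∈ C₂ ∧ e' ∉ C₁) := by
      by_contra hcon
      push_neg at hcon
      exact h5 (Set.Subset.antisymm hcon.1 hcon.2)
    rcases hdiff with ⟨e', ha, hb⟩ | ⟨e', ha, hb⟩
    · exact hcase C₁ C₂ h1 h2 h3 h4 e' ha hb
    · exact hcase C₂ C₁ h2 h1 h4 h3 e' ha hb
  refine ⟨Y, hYK, ?_, le_antisymm hle hge⟩
  intro Zs hZsY ⟨hZconn, C₁, C₂, h1, h2, h3, h4, h5⟩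
  have hcard : Y.ncard ≤ (VX G Y).ncard := by rw [hYvx]; omega
  exact h5 (cycles_eq hYconn hcard h3 (h1.trans hZsY) h4 (h2.trans hZsY))

lemma good_union (he : e ∈ X) {IK I' : Set E} (hIK : IK ⊆ gcomp G X e)
    (hI' : I' ⊆ X \ gcomp G X e) (hgood1 : Good G IK) (hgood2 : Good G I') :
    Good G (IK ∪ I') := by
  rintro Zs hZs ⟨hZconn, hZtwo⟩
  have hsubX : Zs ⊆ X := hZs.trans
    (Set.union_subset (hIK.trans gcomp_subset) (hI'.trans diff_subset))
  by_cases hmeet : ∃ aK, aK ∈ Zs ∧ aK ∈ IK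
  · obtain ⟨aK, haZ, haIK⟩ := hmeet
    have hsub : Zs ⊆ IK := by
      intro b hb
      rcases hZs hb with hbIK | hbI'
      · exact hbIK
      · exfalso
        have hrtgX : Relation.ReflTransGen (EAdj G X) aK b :=
          rtg_mono hsubX (hZconn aK haZ b hb)
        have hbK : b ∈ gcomp G X aK := ⟨hsubX hb, hrtgX⟩
        have heq := gcomp_eq_of_mem (hIK haIK)
        rw [heq] at hbK
        exact (hI' hbI').2 hbK
    exact hgood1 Zs hsub ⟨hZconn, hZtwo⟩
  · push_neg at hmeet
    have hsub : Zs ⊆ I' := by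
      intro b hb
      rcases hZs hb with h | h
      · exact absurd h (hmeet b hb)
      · exact h
    exact hgood2 Zs hsub ⟨hZconn, hZtwo⟩

/-- P2a: if every component contains a cycle, there is a Good spanning subset. -/
lemma good_spanning : ∀ (n : ℕ) (X : Set E), X.ncard ≤ n →
    (∀ f, f ∈ X → ∃ C, C ⊆ gcomp G X f ∧ IsCycle G C) →
    ∃ I, I ⊆ X ∧ Good G I ∧ (VX G X).ncard ≤ I.ncard := by
  intro n
  induction n with
  | zero =>
    intro X hn _
    have hX0 : X = ∅ := (Set.ncard_eq_zero (Set.toFinite _)).1 (by omega)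
    subst hX0
    refine ⟨∅, subset_rfl, fun Y hY => ?_, ?_⟩
    · rintro ⟨-, C₁, -, hC₁, -, hcy, -, -⟩
      obtain ⟨c, hc⟩ := hcy.1
      exact (hY (hC₁ hc)).elim
    · have : VX G (∅ : Set E) = ∅ := by
        rw [Set.eq_empty_iff_forall_notMem]
        rintro v ⟨f, hf, -⟩
        exact hf
      rw [this]
      simp
  | succ n ih =>
    intro X hn hcyc
    rcases Set.eq_empty_or_nonempty X with rfl | ⟨e, he⟩
    · exact ih ∅ (by simp) (by simp)
    obtain ⟨IK, hIK, hIKgood, hIKcard⟩ := comp_spanning he (hcyc e he)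
    have hKne : 1 ≤ (gcomp G X e).ncard :=
      (Set.ncard_pos (Set.toFinite _)).2 ⟨e, mem_gcomp_self he⟩
    have hsplit := ncard_split (G := G) he
    have hcyc' : ∀ f, f ∈ X \ gcomp G X e →
        ∃ C, C ⊆ gcomp G (X \ gcomp G X e) f ∧ IsCycle G C := by
      intro f hf
      rw [gcomp_transfer he hf]
      exact hcyc f hf.1
    obtain ⟨I', hI', hI'good, hI'card⟩ := ih (X \ gcomp G X e) (by omega) hcyc'
    refine ⟨IK ∪ I', Set.union_subset (hIK.trans gcomp_subset) (hI'.trans diff_subset),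
      good_union he hIK hI' hIKgood hI'good, ?_⟩
    have hdisj : Disjoint IK I' := by
      rw [Set.disjoint_left]
      intro a haIK haI'
      exact (hI' haI').2 (hIK haIK)
    rw [Set.ncard_union_eq hdisj (Set.toFinite _) (Set.toFinite _)]
    have hvsplit := vx_split_card (G := G) he
    omega

lemma dd_comp_eq (he : e ∈ X) (hw : w ∈ VX G (gcomp G X e)) :
    deg G (gcomp G X e) w = deg G X w := deg_gcomp hw

lemma deg_rest (he : e ∈ X) (hw : w ∈ VX G (X \ gcomp G X e)) :
    deg G (X \ gcomp G X e) w = deg G X w := by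
  have hinc : inc G (X \ gcomp G X e) w = inc G X w := by
    ext f
    constructor
    · rintro ⟨hf, hvf⟩; exact ⟨hf.1, hvf⟩
    · rintro ⟨hf, hvf⟩
      refine ⟨⟨hf, fun hfK => ?_⟩, hvf⟩
      exact vx_disjoint_comp_rest (mem_VX_of hfK hvf) hw
  have hlp : lp G (X \ gcomp G X e) w = lp G X w := by
    ext f
    constructor
    · rintro ⟨hf, hvf⟩; exact ⟨hf.1, hvf⟩
    · rintro ⟨hf, hvf⟩
      refine ⟨⟨hf, fun hfK => ?_⟩, hvf⟩
      exact vx_disjoint_comp_rest (mem_VX_of hfK (by rw [hvf]; exact Sym2.mem_mk_left w w)) hw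
  rw [deg_def, deg_def, hinc, hlp]

lemma dd_split_card (he : e ∈ X) :
    (DD G X).ncard = (DD G (gcomp G X e)).ncard + (DD G (X \ gcomp G X e)).ncard := by
  have hset : DD G X = DD G (gcomp G X e) ∪ DD G (X \ gcomp G X e) := by
    ext w
    constructor
    · rintro ⟨hwVX, hdeg⟩
      rw [vx_split he] at hwVX
      rcases hwVX with h | h
      · exact Or.inl ⟨h, by rw [dd_comp_eq he h]; exact hdeg⟩
      · exact Or.inr ⟨h, by rw [deg_rest he h]; exact hdeg⟩
    · rintro (⟨hwVX, hdeg⟩ | ⟨hwVX, hdeg⟩)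
      · exact ⟨VX_mono gcomp_subset hwVX, by rw [← dd_comp_eq he hwVX]; exact hdeg⟩
      · exact ⟨VX_mono diff_subset hwVX, by rw [← deg_rest he hwVX]; exact hdeg⟩
  rw [hset, Set.ncard_union_eq (Set.disjoint_left.2
    (fun {w} hw hw2 => vx_disjoint_comp_rest hw.1 hw2.1)) (Set.toFinite _) (Set.toFinite _)]

/-- P2b: a Good subset witnessing the rank lower bound. -/
lemma good_lower : ∀ (n : ℕ) (X : Set E), X.ncard ≤ n →
    ∃ I, I ⊆ X ∧ Good G I ∧ 2 * (VX G X).ncard ≤ 2 * I.ncard + (DD G X).ncard := by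
  intro n
  induction n with
  | zero =>
    intro X hn
    have hX0 : X = ∅ := (Set.ncard_eq_zero (Set.toFinite _)).1 (by omega)
    subst hX0
    refine ⟨∅, subset_rfl, fun Y hY => ?_, ?_⟩
    · rintro ⟨-, C₁, -, hC₁, -, hcy, -, -⟩
      obtain ⟨c, hc⟩ := hcy.1
      exact (hY (hC₁ hc)).elim
    · have h0 : VX G (∅ : Set E) = ∅ := by
        rw [Set.eq_empty_iff_forall_notMem]
        rintro v ⟨f, hf, -⟩
        exact hf
      rw [h0]
      simp
  | succ n ih =>
    intro X hn
    rcases Set.eq_empty_or_nonempty X with rfl | ⟨e, he⟩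
    · exact ih ∅ (by simp)
    have hKne : 1 ≤ (gcomp G X e).ncard :=
      (Set.ncard_pos (Set.toFinite _)).2 ⟨e, mem_gcomp_self he⟩
    have hsplit := ncard_split (G := G) he
    have hvsplit := vx_split_card (G := G) he
    have hddsplit := dd_split_card (G := G) he
    obtain ⟨I', hI', hI'good, hI'card⟩ := ih (X \ gcomp G X e) (by omega)
    by_cases hcyc : ∃ C, C ⊆ gcomp G X e ∧ IsCycle G C
    · obtain ⟨IK, hIK, hIKgood, hIKcard⟩ := comp_spanning he hcyc
      refine ⟨IK ∪ I', Set.union_subset (hIK.trans gcomp_subset) (hI'.trans diff_subset),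
        good_union he hIK hI' hIKgood hI'good, ?_⟩
      have hdisj : Disjoint IK I' := by
        rw [Set.disjoint_left]
        intro a haIK haI'
        exact (hI' haI').2 (hIK haIK)
      rw [Set.ncard_union_eq hdisj (Set.toFinite _) (Set.toFinite _)]
      omega
    · push_neg at hcyc
      have hKgood : Good G (gcomp G X e) := by
        rintro Zs hZs ⟨-, C₁, -, hC₁, -, hcy, -, -⟩
        exact hcyc C₁ (hC₁.trans hZs) hcy
      refine ⟨gcomp G X e ∪ I', Set.union_subset gcomp_subset (hI'.trans diff_subset),
        good_union he subset_rfl hI' hKgood hI'good, ?_⟩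
      have hdisj : Disjoint (gcomp G X e) I' := by
        rw [Set.disjoint_left]
        intro a haIK haI'
        exact (hI' haI').2 haIK
      rw [Set.ncard_union_eq hdisj (Set.toFinite _) (Set.toFinite _)]
      have huniv := deg_sum_bound G (gcomp G X e)
      omega

section MatroidGlue

variable {M : Matroid E} {I D : Set E}

lemma rk_le {n : ℕ} {X : Set E} (hn : ∀ I, M.Indep I → I ⊆ X → I.ncard ≤ n) : rk M X ≤ n := by
  apply csSup_le
  · exact ⟨0, ∅, M.empty_indep, Set.empty_subset X, (Set.ncard_empty _).symm⟩
  · rintro m ⟨I, hI, hIX, rfl⟩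
    exact hn I hI hIX

lemma le_rk {X : Set E} (hI : M.Indep I) (hIX : I ⊆ X) : I.ncard ≤ rk M X := by
  apply le_csSup
  · refine ⟨Fintype.card E, ?_⟩
    rintro m ⟨J, hJ, hJX, rfl⟩
    have h := Set.ncard_le_ncard (Set.subset_univ J) (Set.toFinite _)
    rwa [Set.ncard_univ, Nat.card_eq_fintype_card] at h
  · exact ⟨I, hI, hIX, rfl⟩

lemma dep_has_circ : ∀ (n : ℕ) (D : Set E), D.ncard ≤ n → M.Dep D →
    ∃ C, C ⊆ D ∧ Circ M C := by
  intro n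
  induction n with
  | zero =>
    intro D h hD
    exfalso
    have hD0 : D = ∅ := (Set.ncard_eq_zero (Set.toFinite _)).1 (by omega)
    subst hD0
    exact hD.not_indep M.empty_indep
  | succ n ih =>
    intro D hn hD
    by_cases h : ∀ D', D' ⊂ D → M.Indep D'
    · exact ⟨D, subset_rfl, hD, h⟩
    · push_neg at h
      obtain ⟨D', hD'D, hD'⟩ := h
      have hdep : M.Dep D' := ⟨hD', hD'D.subset.trans hD.subset_ground⟩
      exact (ih D' (by have := Set.ncard_lt_ncard hD'D (Set.toFinite _); omega) hdep).imp
        (fun C hC => ⟨hC.1.trans hD'D.subset, hC.2⟩)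

lemma indep_iff_good (hME : M.E = Set.univ) (hcirc : ∀ C, Circ M C ↔ IsBicycle G C) :
    M.Indep I ↔ Good G I := by
  constructor
  · intro hI
    rw [good_iff_no_bicycle]
    intro Z hZI hZ
    exact ((hcirc Z).2 hZ).1.not_indep (hI.subset hZI)
  · intro hg
    by_contra hni
    have hdep : M.Dep I := ⟨hni, by rw [hME]; exact Set.subset_univ I⟩
    obtain ⟨C, hCI, hC⟩ := dep_has_circ I.ncard I le_rfl hdep
    exact (good_iff_no_bicycle.1 hg) C hCI ((hcirc C).1 hC)

lemma bicycle_min_deg {Z : Set E} (hZ : IsBicycle G Z) (hv : v ∈ VX G Z) :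
    2 ≤ deg G Z v := by
  by_contra hlt
  push_neg at hlt
  have hd1 : deg G Z v = 1 := by have := deg_pos_of_mem hv; omega
  obtain ⟨e, he, hve⟩ := mem_VX_iff_inc.1 hv
  obtain ⟨hZconn, C₁, C₂, h1, h2, h3, h4, h5⟩ := hZ.1
  have hnotin : ∀ C', C' ⊆ Z → IsCycle G C' → e ∉ C' := by
    intro C' hC' hcy heC'
    have hdc := hcy.2.2 v (mem_VX_of heC' hve)
    have hmono := deg_mono (G := G) (v := v) hC'
    omega
  apply hZ.2 (Z \ {e}) (Set.sdiff_singleton_ssubset.2 he)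
  refine ⟨connOn_diff_pendant hZconn he hve hd1, C₁, C₂, ?_, ?_, h3, h4, h5⟩
  · exact fun c hc => ⟨h1 hc, fun hh => hnotin C₁ h1 h3 (Set.mem_singleton_iff.1 hh ▸ hc)⟩
  · exact fun c hc => ⟨h2 hc, fun hh => hnotin C₂ h2 h4 (Set.mem_singleton_iff.1 hh ▸ hc)⟩

lemma exists_bicycle_mem (hME : M.E = Set.univ) (hcirc : ∀ C, Circ M C ↔ IsBicycle G C)
    (hMconn : MConn M) (hcard : 2 ≤ (Set.univ : Set E).ncard) (e : E) :
    ∃ Z, IsBicycle G Z ∧ e ∈ Z := by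
  obtain ⟨f, -, hfe⟩ := Set.exists_ne_of_one_lt_ncard (s := (Set.univ : Set E)) (by omega) e
  have hef : e ≠ f := hfe.symm
  obtain ⟨C, hC, heC, -⟩ := hMconn.2 e (by rw [hME]; trivial) f (by rw [hME]; trivial) hef
  exact ⟨C, (hcirc C).1 hC, heC⟩

lemma two_edge_cocirc (hME : M.E = Set.univ) (hcirc : ∀ C, Circ M C ↔ IsBicycle G C)
    (hMconn : MConn M) (hcard : 2 ≤ (Set.univ : Set E).ncard)
    (hef : e ≠ f) (hw_e : w ∈ G.ends e) (hw_f : w ∈ G.ends f)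
    (honly : ∀ g, w ∈ G.ends g → g = e ∨ g = f)
    (hnde : ¬(G.ends e).IsDiag) (hndf : ¬(G.ends f).IsDiag) :
    Cocirc M {e, f} := by
  have hkey : ∀ Z, IsBicycle G Z → (e ∈ Z → f ∈ Z) ∧ (f ∈ Z → e ∈ Z) := by
    intro Z hZ
    have main : ∀ a b : E, (∀ g, w ∈ G.ends g → g = a ∨ g = b) → ¬(G.ends a).IsDiag →
        w ∈ G.ends a → a ∈ Z → b ∉ Z → False := by
      intro a b honly' hnda hwa haZ hbZ
      have hmin := bicycle_min_deg hZ (mem_VX_of haZ hwa)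
      have hinc : inc G Z w ⊆ {a} := by
        rintro g ⟨hgZ, hwg⟩
        rcases honly' g hwg with rfl | rfl
        · rfl
        · exact absurd hgZ hbZ
      have hlp : lp G Z w = ∅ := by
        rw [Set.eq_empty_iff_forall_notMem]
        rintro g ⟨hgZ, hlg⟩
        have hwg : w ∈ G.ends g := by rw [hlg]; exact Sym2.mem_mk_left w w
        rcases honly' g hwg with rfl | rfl
        · exact hnda (by rw [hlg]; exact Sym2.mk_isDiag_iff.2 rfl)
        · exact hbZ hgZ
      have h1 := Set.ncard_le_ncard hinc (Set.toFinite _)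
      rw [Set.ncard_singleton] at h1
      rw [deg_def, hlp, Set.ncard_empty] at hmin
      omega
    constructor
    · intro heZ; by_contra hfZ; exact main e f honly hnde hw_e heZ hfZ
    · intro hfZ; by_contra heZ
      exact main f e (fun g hg => (honly g hg).symm) hndf hw_f hfZ heZ
  have hsing : ∀ x : E, M✶.Indep {x} := by
    intro x
    obtain ⟨Z, hZ, hxZ⟩ := exists_bicycle_mem hME hcirc hMconn hcard x
    rw [Matroid.dual_indep_iff_exists']
    refine ⟨by rw [hME]; exact Set.subset_univ _, ?_⟩
    by_contra hno
    push_neg at hno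
    have hall : ∀ B', M.IsBase B' → x ∈ B' := by
      intro B' hB'
      by_contra hxB
      exact (hno B' hB') (Set.disjoint_singleton_left.2 hxB)
    have hZcirc : Circ M Z := (hcirc Z).2 hZ
    have hind : M.Indep (Z \ {x}) := hZcirc.2 _ (Set.sdiff_singleton_ssubset.2 hxZ)
    obtain ⟨B', hB', hZB⟩ := hind.exists_isBase_superset
    have hZsub : Z ⊆ B' := by
      intro z hz
      by_cases hzx : z = x
      · rw [hzx]; exact hall B' hB'
      · exact hZB ⟨hz, fun h => hzx (Set.mem_singleton_iff.1 h)⟩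
    exact hZcirc.1.not_indep (hB'.indep.subset hZsub)
  constructor
  · rw [Matroid.dep_iff]
    constructor
    · intro hind
      rw [Matroid.dual_indep_iff_exists'] at hind
      obtain ⟨-, B', hB', hdisj⟩ := hind
      have heB : e ∉ B' := Set.disjoint_left.1 hdisj (by simp)
      have hdep := hB'.insert_dep ⟨by rw [hME]; trivial, heB⟩
      obtain ⟨C, hCsub, hC⟩ := dep_has_circ (insert e B').ncard _ le_rfl hdep
      have heC : e ∈ C := by
        by_contra heC2
        have hCB : C ⊆ B' := by
          intro c hc
          rcases hCsub hc with rfl | h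
          · exact absurd hc heC2
          · exact h
        exact hC.1.not_indep (hB'.indep.subset hCB)
      have hfC : f ∈ C := (hkey C ((hcirc C).1 hC)).1 heC
      have hfB : f ∈ B' := by
        rcases hCsub hfC with h | h
        · exact absurd h (Ne.symm hef)
        · exact h
      exact Set.disjoint_left.1 hdisj (by simp) hfB
    · rw [Matroid.dual_ground, hME]; exact Set.subset_univ _
  · intro D hD
    have hDsub := hD.subset
    by_cases heD : e ∈ D
    · by_cases hfD : f ∈ D
      · exact absurd (Set.Subset.antisymm hDsub
          (by rintro x (rfl | rfl); exacts [heD, hfD])) hD.ne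
      · have hDe : D ⊆ {e} := by
          intro x hx
          rcases hDsub hx with rfl | rfl
          · rfl
          · exact absurd hx hfD
        exact (hsing e).subset hDe
    · have hDf : D ⊆ {f} := by
        intro x hx
        rcases hDsub hx with rfl | rfl
        · exact absurd hx heD
        · rfl
      exact (hsing f).subset hDf

lemma cross_boundary (hME : M.E = Set.univ) (hcirc : ∀ C, Circ M C ↔ IsBicycle G C)
    (hMconn : MConn M) (hUn : A ∪ B = Set.univ) (hAB : A ∩ B = ∅)
    (he0 : e ∈ A) (hB_ne : B.Nonempty) :
    ∃ x, x ∈ VX G (gcomp G A e) ∧ x ∈ VX G B := by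
  obtain ⟨f0, hf0⟩ := hB_ne
  have hef : e ≠ f0 := fun h => (Set.eq_empty_iff_forall_notMem.1 hAB e) ⟨he0, h ▸ hf0⟩
  obtain ⟨Zc, hZc, heZ, hfZ⟩ :=
    hMconn.2 e (by rw [hME]; trivial) f0 (by rw [hME]; trivial) hef
  have hZb : IsBicycle G Zc := (hcirc Zc).1 hZc
  have hrtg := hZb.1.1 e heZ f0 hfZ
  have hf0A : f0 ∉ A := fun h => (Set.eq_empty_iff_forall_notMem.1 hAB f0) ⟨h, hf0⟩
  have key : ∀ b', Relation.ReflTransGen (EAdj G Zc) e b' →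
      (b' ∈ A → (Relation.ReflTransGen (EAdj G A) e b' ∨
        ∃ x, x ∈ VX G (gcomp G A e) ∧ x ∈ VX G B)) ∧
      (b' ∉ A → ∃ x, x ∈ VX G (gcomp G A e) ∧ x ∈ VX G B) := by
    intro b' hb'
    induction hb' with
    | refl => exact ⟨fun _ => Or.inl .refl, fun h => absurd he0 h⟩
    | tail h1 h2 ih =>
      rename_i c d
      have hdB : d ∉ A → d ∈ B := by
        intro hdA
        have hd : d ∈ A ∪ B := hUn ▸ Set.mem_univ d
        rcases hd with h | h
        · exact absurd h hdA
        · exact h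
      constructor
      · intro hdA
        by_cases hcA : c ∈ A
        · rcases ih.1 hcA with hr | hc
          · exact Or.inl (hr.tail ⟨hcA, hdA, h2.2.2⟩)
          · exact Or.inr hc
        · exact Or.inr (ih.2 hcA)
      · intro hdA
        by_cases hcA : c ∈ A
        · rcases ih.1 hcA with hr | hc
          · obtain ⟨vv, hvc, hvd⟩ := h2.2.2
            exact ⟨vv, mem_VX_of (⟨hcA, hr⟩ : c ∈ gcomp G A e) hvc,
              mem_VX_of (hdB hdA) hvd⟩
          · exact hc
        · exact ih.2 hcA
  exact (key f0 hrtg).2 hf0A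

end MatroidGlue

lemma sum3 (s : Finset V) (f : V → ℕ) (u v w : V) (hu : u ∈ s) (hv : v ∈ s) (hw : w ∈ s)
    (huv : u ≠ v) (huw : u ≠ w) (hvw : v ≠ w)
    (h2 : ∀ x ∈ s, x ≠ u → x ≠ v → x ≠ w → 2 ≤ f x)
    (hfu : 1 ≤ f u) (hfv : 1 ≤ f v) (hfw : 3 ≤ f w) :
    2 * s.card ≤ (∑ x ∈ s, f x) + 1 := by
  classical
  have ht : ({u, v, w} : Finset V) ⊆ s := by
    intro x hx
    simp only [Finset.mem_insert, Finset.mem_singleton] at hx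
    rcases hx with rfl | rfl | rfl <;> assumption
  have hsplit := Finset.sum_sdiff (f := f) ht
  have b1 : ∑ _x ∈ s \ {u, v, w}, 2 ≤ ∑ x ∈ s \ {u, v, w}, f x := by
    apply Finset.sum_le_sum
    intro x hx
    have hx' := Finset.mem_sdiff.1 hx
    have hnm := hx'.2
    simp only [Finset.mem_insert, Finset.mem_singleton, not_or] at hnm
    exact h2 x hx'.1 hnm.1 hnm.2.1 hnm.2.2
  rw [Finset.sum_const, smul_eq_mul] at b1
  have hcard3 : ({u, v, w} : Finset V).card = 3 := by
    rw [Finset.card_insert_of_notMem (by simp [huv, huw]),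
      Finset.card_insert_of_notMem (by simp [hvw]), Finset.card_singleton]
  have hsum3 : ∑ x ∈ ({u, v, w} : Finset V), f x = f u + f v + f w := by
    rw [Finset.sum_insert (by simp [huv, huw]), Finset.sum_insert (by simp [hvw]),
      Finset.sum_singleton]
    ring
  have hc := Finset.card_sdiff_of_subset ht
  have hle := Finset.card_le_card ht
  omega

lemma dd_subset_boundary {M : Matroid E} (hME : M.E = Set.univ)
    (hcirc : ∀ C, Circ M C ↔ IsBicycle G C) (hMconn : MConn M)
    (hcard : 2 ≤ (Set.univ : Set E).ncard) (hUn : A ∪ B = Set.univ) (hAB : A ∩ B = ∅) :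
    DD G A ⊆ VX G A ∩ VX G B := by
  rintro w ⟨hwVX, hdeg⟩
  refine ⟨hwVX, ?_⟩
  by_contra hwB
  have hdB : deg G B w = 0 := deg_eq_zero_of_not_mem hwB
  have hdU : deg G Set.univ w = 1 := by
    rw [← hUn, deg_union hAB, hdB, hdeg]
  obtain ⟨e, he, hwe⟩ := mem_VX_iff_inc.1 hwVX
  obtain ⟨Z, hZ, heZ⟩ := exists_bicycle_mem hME hcirc hMconn hcard e
  have hmin := bicycle_min_deg hZ (mem_VX_of heZ hwe)
  have hmono := deg_mono (G := G) (X := Z) (Y := Set.univ) (v := w) (Set.subset_univ _)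
  omega

lemma main_side {M : Matroid E} (hME : M.E = Set.univ)
    (hcirc : ∀ C, Circ M C ↔ IsBicycle G C) (hMconn : MConn M)
    (hUn : A ∪ B = Set.univ) (hAB : A ∩ B = ∅)
    (hB_ne : B.Nonempty)
    (hDDsub : DD G A ⊆ VX G A ∩ VX G B)
    (ht : (VX G A ∩ VX G B).ncard = 2)
    (hacyc : ∃ e, e ∈ A ∧ ∀ C, C ⊆ gcomp G A e → ¬IsCycle G C) :
    ∃ u v, IsPathBtw G A u v ∧ VX G A ∩ VX G B = {u, v} := by
  classical
  obtain ⟨e0, he0, hKacyc⟩ := hacyc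
  have hKA : gcomp G A e0 ⊆ A := gcomp_subset
  have hKne : (gcomp G A e0).Nonempty := ⟨e0, mem_gcomp_self he0⟩
  have hKacyc' : Acyclic G (gcomp G A e0) := fun C hC => hKacyc C hC
  have hDDK : DD G (gcomp G A e0) ⊆ DD G A := by
    rintro w ⟨hwVX, hdeg⟩
    exact ⟨VX_mono hKA hwVX, by rw [← deg_gcomp hwVX]; exact hdeg⟩
  have hb1 := acyclic_bound hKacyc' hKne
  have hb2 := deg_sum_bound G (gcomp G A e0)
  have hDDK2 : 2 ≤ (DD G (gcomp G A e0)).ncard := by omega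
  have hsub : DD G (gcomp G A e0) ⊆ VX G A ∩ VX G B := hDDK.trans hDDsub
  have hDDeq : DD G (gcomp G A e0) = VX G A ∩ VX G B :=
    Set.eq_of_subset_of_ncard_le hsub (by omega) (Set.toFinite _)
  obtain ⟨u, v', huv, hbdeq⟩ := Set.ncard_eq_two.1 ht
  have hAK : A = gcomp G A e0 := by
    apply Set.Subset.antisymm _ hKA
    intro g hg
    obtain ⟨x, hx1, hx2⟩ := cross_boundary hME hcirc hMconn hUn hAB hg hB_ne
    have hxbd : x ∈ VX G A ∩ VX G B := ⟨VX_mono gcomp_subset hx1, hx2⟩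
    have hxK : x ∈ VX G (gcomp G A e0) := by
      rw [← hDDeq] at hxbd
      exact dd_subset_vx hxbd
    have heq := gcomp_eq_of_vx hx1 hxK
    rw [← heq]
    exact mem_gcomp_self hg
  have hDDA_eq : DD G A = VX G A ∩ VX G B := by
    conv_lhs => rw [hAK]
    exact hDDeq
  have hubd : u ∈ DD G A := by rw [hDDA_eq, hbdeq]; exact Or.inl rfl
  have hvbd : v' ∈ DD G A := by rw [hDDA_eq, hbdeq]; exact Or.inr rfl
  have hdu : deg G A u = 1 := hubd.2
  have hdv : deg G A v' = 1 := hvbd.2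
  refine ⟨u, v', ⟨?_, ?_, ?_, huv, hdu, hdv, ?_⟩, hbdeq⟩
  · rw [hAK]; exact hKne
  · rw [hAK]; exact gcomp_connOn
  · rw [hAK]; exact hKacyc'
  · intro w hwA
    by_contra hgt
    push_neg at hgt
    have hw3 : 3 ≤ deg G A w := hgt
    have hwu : w ≠ u := by intro h; rw [h, hdu] at hw3; omega
    have hwv : w ≠ v' := by intro h; rw [h, hdv] at hw3; omega
    have hsum := sum_deg_eq G A
    set F := (VX G A).toFinite.toFinset with hF
    have hmemF : ∀ x, x ∈ VX G A → x ∈ F := fun x hx => (VX G A).toFinite.mem_toFinset.2 hx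
    have hrest : ∀ x ∈ F, x ≠ u → x ≠ v' → x ≠ w → 2 ≤ deg G A x := by
      intro x hxF hxu hxv hxw
      have hxVX : x ∈ VX G A := (VX G A).toFinite.mem_toFinset.1 hxF
      have h1 := deg_pos_of_mem hxVX
      have h2 : deg G A x ≠ 1 := by
        intro hh
        have hxDD : x ∈ DD G A := ⟨hxVX, hh⟩
        rw [hDDA_eq, hbdeq] at hxDD
        rcases hxDD with h | h
        · exact hxu h
        · exact hxv h
      omega
    have hb := sum3 F (deg G A) u v' w (hmemF u hubd.1) (hmemF v' hvbd.1) (hmemF w hwA)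
      huv (Ne.symm hwu) (Ne.symm hwv) hrest (by omega) (by omega) hw3
    have hacb : A.ncard + 1 ≤ (VX G A).ncard := by
      rw [hAK]
      exact acyclic_bound hKacyc' hKne
    have hFc : (VX G A).ncard = F.card := Set.ncard_eq_toFinset_card _ _
    omega

end Dev

end Bicirc

open Bicirc in
theorem stmt18 {V E : Type*} [Fintype V] [Fintype E] (G : MGraph V E)
    (hG : GConn G) (M : Matroid E) (hM : IsBicircOf G M) (hconn : MConn M)
    (A : Set E) (hsep : TwoSep M A (M.E \ A))
    (hser : ∀ S : Set E, Cocirc M S → S.ncard = 2 → S ⊆ A ∨ S ⊆ M.E \ A) :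
    (∃ w, VX G A ∩ VX G (M.E \ A) = {w}) ∨
      (∃ u v, IsPathBtw G A u v ∧ VX G A ∩ VX G (M.E \ A) = {u, v}) ∨
      (∃ u v, IsPathBtw G (M.E \ A) u v ∧ VX G A ∩ VX G (M.E \ A) = {u, v}) := by
  classical
  obtain ⟨hME, hcirc⟩ := hM
  set B := M.E \ A with hBdef
  obtain ⟨hsepU, hsepI, hA2, hB2, hrk⟩ := hsep
  have hBu : B = Set.univ \ A := by rw [hBdef, hME]
  have hUn : A ∪ B = Set.univ := by
    rw [hBu, Set.union_diff_cancel (Set.subset_univ A)]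
  have hAB : A ∩ B = ∅ := by
    rw [hBu, Set.eq_empty_iff_forall_notMem]
    rintro x ⟨hx1, -, hx2⟩
    exact hx2 hx1
  have hcardU : 2 ≤ (Set.univ : Set E).ncard := by
    have := Set.ncard_le_ncard (Set.subset_univ A) (Set.toFinite _)
    omega
  have hA_ne : A.Nonempty := (Set.ncard_pos (Set.toFinite _)).1 (by omega)
  have hB_ne : B.Nonempty := (Set.ncard_pos (Set.toFinite _)).1 (by omega)
  obtain ⟨eA, heA⟩ := hA_ne
  obtain ⟨x0, hx01, hx02⟩ := cross_boundary hME hcirc hconn hUn hAB heA hB_ne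
  have hbd_ne : (VX G A ∩ VX G B).Nonempty := ⟨x0, VX_mono gcomp_subset hx01, hx02⟩
  have hDDA : DD G A ⊆ VX G A ∩ VX G B := dd_subset_boundary hME hcirc hconn hcardU hUn hAB
  have hDDB : DD G B ⊆ VX G B ∩ VX G A :=
    dd_subset_boundary hME hcirc hconn hcardU (by rw [Set.union_comm]; exact hUn)
      (by rw [Set.inter_comm]; exact hAB)
  have hDDB' : DD G B ⊆ VX G A ∩ VX G B := by
    intro w hw
    have h := hDDB hw
    exact ⟨h.2, h.1⟩
  have hDDdisj : Disjoint (DD G A) (DD G B) := by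
    rw [Set.disjoint_left]
    rintro w ⟨hwA, hdA⟩ ⟨hwB, hdB⟩
    obtain ⟨e, he, hwe⟩ := mem_VX_iff_inc.1 hwA
    obtain ⟨f, hf, hwf⟩ := mem_VX_iff_inc.1 hwB
    have huA := deg_one_unique hdA he hwe
    have huB := deg_one_unique hdB hf hwf
    have hef : e ≠ f := fun h => (Set.eq_empty_iff_forall_notMem.1 hAB e) ⟨he, h ▸ hf⟩
    have honly : ∀ g, w ∈ G.ends g → g = e ∨ g = f := by
      intro g hg
      have hgu : g ∈ A ∪ B := hUn ▸ Set.mem_univ g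
      rcases hgu with h | h
      · exact Or.inl (huA.1 g h hg)
      · exact Or.inr (huB.1 g h hg)
    have hcc := two_edge_cocirc hME hcirc hconn hcardU hef hwe hwf honly huA.2 huB.2
    rcases hser {e, f} hcc (Set.ncard_pair hef) with h | h
    · exact (Set.eq_empty_iff_forall_notMem.1 hAB f) ⟨h (by simp), hf⟩
    · exact (Set.eq_empty_iff_forall_notMem.1 hAB e) ⟨he, h (by simp)⟩
  have hrkA : 2 * (VX G A).ncard ≤ 2 * rk M A + (DD G A).ncard := by
    obtain ⟨I, hIA, hIgood, hIc⟩ := good_lower (G := G) A.ncard A le_rfl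
    have hind : M.Indep I := (indep_iff_good hME hcirc).2 hIgood
    have := le_rk hind hIA
    omega
  have hrkB : 2 * (VX G B).ncard ≤ 2 * rk M B + (DD G B).ncard := by
    obtain ⟨I, hIB, hIgood, hIc⟩ := good_lower (G := G) B.ncard B le_rfl
    have hind : M.Indep I := (indep_iff_good hME hcirc).2 hIgood
    have := le_rk hind hIB
    omega
  have hrkM : rkM M ≤ (VX G Set.univ).ncard := by
    have hrw : rkM M = rk M M.E := rfl
    rw [hrw, hME]
    apply rk_le
    intro I hI hIU
    have hIgood := (indep_iff_good hME hcirc).1 hI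
    have h1 := good_bound I.ncard I le_rfl hIgood
    have h2 := Set.ncard_le_ncard (VX_mono (Set.subset_univ I)) (Set.toFinite (VX G Set.univ))
    omega
  have hie : (VX G A).ncard + (VX G B).ncard =
      (VX G Set.univ).ncard + (VX G A ∩ VX G B).ncard := by
    have h1 : VX G A ∪ VX G B = VX G Set.univ := by rw [← VX_union, hUn]
    have h2 := Set.ncard_union_add_ncard_inter (VX G A) (VX G B) (Set.toFinite _) (Set.toFinite _)
    rw [h1] at h2
    omega
  have hDDsum : (DD G A).ncard + (DD G B).ncard ≤ (VX G A ∩ VX G B).ncard := by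
    have h1 := Set.ncard_union_eq hDDdisj (Set.toFinite _) (Set.toFinite _)
    have h2 : DD G A ∪ DD G B ⊆ VX G A ∩ VX G B := Set.union_subset hDDA hDDB'
    have := Set.ncard_le_ncard h2 (Set.toFinite _)
    omega
  have ht2 : (VX G A ∩ VX G B).ncard ≤ 2 := by omega
  have ht1 : 1 ≤ (VX G A ∩ VX G B).ncard := (Set.ncard_pos (Set.toFinite _)).2 hbd_ne
  rcases Nat.lt_or_ge (VX G A ∩ VX G B).ncard 2 with hlt | hge
  · left
    exact Set.ncard_eq_one.1 (by omega)
  · have ht : (VX G A ∩ VX G B).ncard = 2 := by omega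
    by_cases hacA : ∃ e, e ∈ A ∧ ∀ C, C ⊆ gcomp G A e → ¬IsCycle G C
    · right; left
      exact main_side hME hcirc hconn hUn hAB hB_ne hDDA ht hacA
    by_cases hacB : ∃ e, e ∈ B ∧ ∀ C, C ⊆ gcomp G B e → ¬IsCycle G C
    · right; right
      obtain ⟨u, v, h1, h2⟩ := main_side (A := B) (B := A) hME hcirc hconn
        (by rw [Set.union_comm]; exact hUn) (by rw [Set.inter_comm]; exact hAB)
        ⟨eA, heA⟩ hDDB (by rw [Set.inter_comm]; exact ht) hacB
      exact ⟨u, v, h1, by rw [Set.inter_comm]; exact h2⟩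
    · exfalso
      push_neg at hacA hacB
      have hcycA : ∀ f, f ∈ A → ∃ C, C ⊆ gcomp G A f ∧ IsCycle G C := by
        intro f hf
        obtain ⟨C, hC1, hC2⟩ := hacA f hf
        exact ⟨C, hC1, hC2⟩
      have hcycB : ∀ f, f ∈ B → ∃ C, C ⊆ gcomp G B f ∧ IsCycle G C := by
        intro f hf
        obtain ⟨C, hC1, hC2⟩ := hacB f hf
        exact ⟨C, hC1, hC2⟩
      obtain ⟨IA, hIA1, hIA2, hIA3⟩ := good_spanning (G := G) A.ncard A le_rfl hcycA
      obtain ⟨IB, hIB1, hIB2, hIB3⟩ := good_spanning (G := G) B.ncard B le_rfl hcycB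
      have r1 := le_rk ((indep_iff_good hME hcirc).2 hIA2) hIA1
      have r2 := le_rk ((indep_iff_good hME hcirc).2 hIB2) hIB1
      omega
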